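/- arXiv:1402.6957 — 6 statements merged into one kernel-verified Lean document; each statement's English description precedes it below -/
import Mathlib

section
/- Let R be a ring and let A, B, C be biuniform right R-modules such that C and A belong to the same monogeny class and C and B belong to the same epigeny class. Then there exists a biuniform right R-module D such that A ⊕ B ≅ C ⊕ D; moreover, D and B belong to the same monogeny class and D and A belong to the same epigeny class. -/
/-- Two modules belong to the same monogeny class if there are injective homomorphisms
in both directions. -/
def SameMonogenyClass (R : Type*) [Ring R] (M N : Type*) [AddCommGroup M] [Module R M]
    [AddCommGroup N] [Module R N] : Prop :=
  (∃ f : M →ₗ[R] N, Function.Injective f) ∧ ∃ g : N →ₗ[R] M, Function.Injective g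

/-- Two modules belong to the same epigeny class if there are surjective homomorphisms
in both directions. -/
def SameEpigenyClass (R : Type*) [Ring R] (M N : Type*) [AddCommGroup M] [Module R M]
    [AddCommGroup N] [Module R N] : Prop :=
  (∃ f : M →ₗ[R] N, Function.Surjective f) ∧ ∃ g : N →ₗ[R] M, Function.Surjective g

/-- A module is uniform if it is nonzero and any two nonzero submodules intersect
nontrivially. -/
def IsUniformModule (R : Type*) [Ring R] (M : Type*) [AddCommGroup M] [Module R M] : Prop :=
  (∃ x : M, x ≠ 0) ∧ ∀ N P : Submodule R M, N ≠ ⊥ → P ≠ ⊥ → N ⊓ P ≠ ⊥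

/-- A module is couniform (hollow) if it is nonzero and the sum of any two proper
submodules is proper. -/
def IsCouniformModule (R : Type*) [Ring R] (M : Type*) [AddCommGroup M] [Module R M] : Prop :=
  (∃ x : M, x ≠ 0) ∧ ∀ N P : Submodule R M, N ≠ ⊤ → P ≠ ⊤ → N ⊔ P ≠ ⊤

/-- A module is biuniform if it is both uniform and couniform. -/
def IsBiuniformModule (R : Type*) [Ring R] (M : Type*) [AddCommGroup M] [Module R M] : Prop :=
  IsUniformModule R M ∧ IsCouniformModule R M

section Aux

variable {R : Type u} [Ring R] {M N : Type v} [AddCommGroup M] [Module R M]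
  [AddCommGroup N] [Module R N]

/-- A nonzero module embedding into a uniform module is uniform. -/
lemma isUniform_of_injective (hM : ∃ x : M, x ≠ 0) (f : M →ₗ[R] N)
    (hf : Function.Injective f) (hN : IsUniformModule R N) : IsUniformModule R M := by
  refine ⟨hM, fun P Q hP hQ => ?_⟩
  obtain ⟨x, hxP, hx0⟩ := Submodule.ne_bot_iff P |>.1 hP
  obtain ⟨y, hyQ, hy0⟩ := Submodule.ne_bot_iff Q |>.1 hQ
  have hPne : P.map f ≠ ⊥ := by
    rw [Submodule.ne_bot_iff]
    exact ⟨f x, Submodule.mem_map_of_mem hxP, fun h => hx0 (hf (by rw [h, map_zero]))⟩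
  have hQne : Q.map f ≠ ⊥ := by
    rw [Submodule.ne_bot_iff]
    exact ⟨f y, Submodule.mem_map_of_mem hyQ, fun h => hy0 (hf (by rw [h, map_zero]))⟩
  have := hN.2 _ _ hPne hQne
  obtain ⟨z, hzmem, hz0⟩ := Submodule.ne_bot_iff _ |>.1 this
  obtain ⟨hz1, hz2⟩ := Submodule.mem_inf.1 hzmem
  obtain ⟨a, haP, ha⟩ := hz1
  obtain ⟨b, hbQ, hb⟩ := hz2
  have hab : a = b := hf (by rw [ha, hb])
  rw [Submodule.ne_bot_iff]
  refine ⟨a, Submodule.mem_inf.2 ⟨haP, hab ▸ hbQ⟩, fun h => hz0 ?_⟩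
  rw [← ha, h, map_zero]

/-- A nonzero quotient of a couniform module is couniform. -/
lemma isCouniform_of_surjective (hM : ∃ x : M, x ≠ 0) (f : N →ₗ[R] M)
    (hf : Function.Surjective f) (hN : IsCouniformModule R N) : IsCouniformModule R M := by
  refine ⟨hM, fun P Q hP hQ htop => ?_⟩
  have hrange : LinearMap.range f = ⊤ := LinearMap.range_eq_top.2 hf
  have hmapP : (P.comap f).map f = P := Submodule.map_comap_eq_self (by rw [hrange]; exact le_top)
  have hmapQ : (Q.comap f).map f = Q := Submodule.map_comap_eq_self (by rw [hrange]; exact le_top)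
  have hP' : P.comap f ≠ ⊤ := fun h => hP (by rw [← hmapP, h, Submodule.map_top, hrange])
  have hQ' : Q.comap f ≠ ⊤ := fun h => hQ (by rw [← hmapQ, h, Submodule.map_top, hrange])
  refine hN.2 _ _ hP' hQ' ?_
  rw [eq_top_iff]
  intro x _
  have hx : f x ∈ Submodule.map f (P.comap f ⊔ Q.comap f) := by
    rw [Submodule.map_sup, hmapP, hmapQ, htop]; trivial
  obtain ⟨s, hs, hsx⟩ := hx
  have hker : x - s ∈ P.comap f ⊔ Q.comap f := by
    apply Submodule.mem_sup_left
    rw [Submodule.mem_comap, map_sub, hsx, sub_self]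
    exact P.zero_mem
  have := Submodule.add_mem _ hs hker
  rwa [add_sub_cancel] at this

end Aux

/-- If `A`, `B`, `C` are biuniform modules with `[C]_m = [A]_m` and `[C]_e = [B]_e`, then
there is a biuniform module `D` with `A ⊕ B ≅ C ⊕ D`, `[D]_m = [B]_m` and `[D]_e = [A]_e`. -/
theorem exists_complement_of_biuniform
    {R : Type u} [Ring R] (A B C : Type v)
    [AddCommGroup A] [Module R A] [AddCommGroup B] [Module R B]
    [AddCommGroup C] [Module R C]
    (hA : IsBiuniformModule R A) (hB : IsBiuniformModule R B) (hC : IsBiuniformModule R C)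
    (hm : SameMonogenyClass R C A) (he : SameEpigenyClass R C B) :
    ∃ (D : Type v) (_ : AddCommGroup D) (_ : Module R D),
      IsBiuniformModule R D ∧
      Nonempty ((A × B) ≃ₗ[R] (C × D)) ∧
      SameMonogenyClass R D B ∧ SameEpigenyClass R D A := by
  obtain ⟨⟨f, hf⟩, f', hf'⟩ := hm
  obtain ⟨⟨p, hp⟩, p', hp'⟩ := he
  by_cases h2 : Function.Surjective (f'.comp f)
  · -- f' : A → C is bijective; take D = B
    have hf's : Function.Surjective f' := fun c => by
      obtain ⟨a, ha⟩ := h2 c; exact ⟨f a, ha⟩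
    let e : A ≃ₗ[R] C := LinearEquiv.ofBijective f' ⟨hf', hf's⟩
    refine ⟨B, inferInstance, inferInstance, hB, ⟨e.prodCongr (LinearEquiv.refl R B)⟩,
      ⟨⟨LinearMap.id, fun _ _ h => h⟩, LinearMap.id, fun _ _ h => h⟩,
      ⟨e.symm.toLinearMap.comp p', e.symm.surjective.comp hp'⟩,
      p.comp e.toLinearMap, hp.comp e.surjective⟩
  by_cases h3 : Function.Injective (p'.comp p)
  · -- p' : B → C is bijective; take D = A
    have hp'i : Function.Injective p' := by
      intro b1 b2 hbe
      obtain ⟨c1, rfl⟩ := hp b1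
      obtain ⟨c2, rfl⟩ := hp b2
      exact congrArg p (h3 (show (p'.comp p) c1 = (p'.comp p) c2 from hbe))
    let e : B ≃ₗ[R] C := LinearEquiv.ofBijective p' ⟨hp'i, hp'⟩
    refine ⟨A, inferInstance, inferInstance, hA,
      ⟨(LinearEquiv.prodComm R A B).trans (e.prodCongr (LinearEquiv.refl R A))⟩,
      ⟨⟨e.symm.toLinearMap.comp f', e.symm.injective.comp hf'⟩,
        f.comp e.toLinearMap, hf.comp e.injective⟩,
      ⟨LinearMap.id, Function.surjective_id⟩, LinearMap.id, Function.surjective_id⟩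
  -- main case
  have hffi : Function.Injective ⇑(f'.comp f) := hf'.comp hf
  have hpps : Function.Surjective ⇑(p'.comp p) := hp'.comp hp
  set σ : C →ₗ[R] C := f'.comp f + p'.comp p with hσdef
  have hσadd : ∀ c, σ c = f' (f c) + p' (p c) := fun c => rfl
  have hσinj : Function.Injective σ := by
    rw [← LinearMap.ker_eq_bot]
    by_contra hk
    have hk2 : LinearMap.ker (p'.comp p) ≠ ⊥ := fun h => h3 (LinearMap.ker_eq_bot.1 h)
    obtain ⟨x, hxmem, hx0⟩ := Submodule.ne_bot_iff _ |>.1 (hC.1.2 _ _ hk hk2)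
    obtain ⟨hx1, hx2⟩ := Submodule.mem_inf.1 hxmem
    rw [LinearMap.mem_ker] at hx1 hx2
    have h0 : f' (f x) = 0 := by
      have := hσadd x
      rw [hx1] at this
      have hpx : p' (p x) = 0 := hx2
      rw [hpx, add_zero] at this
      exact this.symm
    exact hx0 (hffi (show (f'.comp f) x = (f'.comp f) 0 by simp [h0]))
  have hσsurj : Function.Surjective σ := by
    rw [← LinearMap.range_eq_top]
    by_contra hr
    have hr2 : LinearMap.range (f'.comp f) ≠ ⊤ := fun h => h2 (LinearMap.range_eq_top.1 h)
    refine hC.2.2 _ _ hr hr2 ?_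
    rw [eq_top_iff]
    intro x _
    obtain ⟨c, hc⟩ := hpps x
    have hx : x = σ c - (f'.comp f) c := by
      rw [← hc, hσadd]
      show (p'.comp p) c = f' (f c) + (p'.comp p) c - f' (f c)
      abel
    rw [hx]
    exact Submodule.sub_mem _ (Submodule.mem_sup_left (LinearMap.mem_range_self σ c))
      (Submodule.mem_sup_right (LinearMap.mem_range_self _ c))
  let σe : C ≃ₗ[R] C := LinearEquiv.ofBijective σ ⟨hσinj, hσsurj⟩
  have hσe : ∀ c, σe c = σ c := fun _ => rfl
  set θ : A × B →ₗ[R] C := f'.coprod p' with hθdef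
  have hθapp : ∀ x : A × B, θ x = f' x.1 + p' x.2 := fun _ => rfl
  set φ : C →ₗ[R] A × B := f.prod p with hφdef
  have hφapp : ∀ c, φ c = (f c, p c) := fun _ => rfl
  have hθφ : ∀ c, θ (φ c) = σ c := fun c => by rw [hθapp, hφapp, hσadd]
  set D := LinearMap.ker θ with hDdef
  -- the splitting equivalence
  set Ψ : C × ↥D →ₗ[R] A × B :=
    (φ.comp (LinearMap.fst R C ↥D)) + (D.subtype.comp (LinearMap.snd R C ↥D)) with hΨdef
  have hΨapp : ∀ x : C × ↥D, Ψ x = φ x.1 + (x.2 : A × B) := fun _ => rfl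
  have hΨinj : Function.Injective Ψ := by
    rw [← LinearMap.ker_eq_bot, eq_bot_iff]
    rintro ⟨c, d⟩ hmem
    rw [LinearMap.mem_ker, hΨapp] at hmem
    have hθd : θ (d : A × B) = 0 := d.2
    have hσc : σ c = 0 := by
      have := congrArg θ hmem
      rw [map_add, map_zero, hθφ, hθd, add_zero] at this
      exact this
    have hc0 : c = 0 := hσinj (by rw [hσc, map_zero])
    have hd0 : (d : A × B) = 0 := by
      rw [hc0, map_zero, zero_add] at hmem
      exact hmem
    rw [Submodule.mem_bot]
    exact Prod.ext hc0 (Subtype.ext hd0)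
  have hσeσ : ∀ x, σ (σe.symm x) = x := fun x => by
    rw [← hσe]; exact σe.apply_symm_apply x
  have hΨsurj : Function.Surjective Ψ := by
    intro x
    refine ⟨(σe.symm (θ x), ⟨x - φ (σe.symm (θ x)), ?_⟩), ?_⟩
    · rw [LinearMap.mem_ker, map_sub, hθφ, hσeσ, sub_self]
    · rw [hΨapp]
      show φ (σe.symm (θ x)) + (x - φ (σe.symm (θ x))) = x
      abel
  -- D is nonzero
  obtain ⟨a0, ha0⟩ := hA.1.1
  obtain ⟨b0, hb0⟩ := hp' (-(f' a0))
  have hmemD : ((a0, b0) : A × B) ∈ D := by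
    rw [LinearMap.mem_ker, hθapp]
    simp [hb0]
  have hDne : ∃ x : ↥D, x ≠ 0 :=
    ⟨⟨(a0, b0), hmemD⟩, fun h => ha0 (congrArg (fun z : ↥D => (z : A × B).1) h)⟩
  -- injection D → B
  set πB : ↥D →ₗ[R] B := (LinearMap.snd R A B).comp D.subtype with hπBdef
  have hπBinj : Function.Injective πB := by
    rw [← LinearMap.ker_eq_bot, eq_bot_iff]
    rintro ⟨⟨a, b⟩, hab⟩ hker
    rw [LinearMap.mem_ker] at hker
    have hb : b = 0 := hker
    rw [LinearMap.mem_ker, hθapp] at hab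
    rw [hb, map_zero, add_zero] at hab
    have ha : a = 0 := hf' (by rw [hab, map_zero])
    rw [Submodule.mem_bot]
    exact Subtype.ext (Prod.ext ha hb)
  -- surjection D → A
  set πA : ↥D →ₗ[R] A := (LinearMap.fst R A B).comp D.subtype with hπAdef
  have hπAsurj : Function.Surjective πA := by
    intro a
    obtain ⟨b, hb⟩ := hp' (-(f' a))
    exact ⟨⟨(a, b), by rw [LinearMap.mem_ker, hθapp]; simp [hb]⟩, rfl⟩
  -- the projection onto D along φ(C)
  set ρ : A × B →ₗ[R] C := σe.symm.toLinearMap.comp θ with hρdef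
  have hρapp : ∀ x, ρ x = σe.symm (θ x) := fun _ => rfl
  have hρφ : ∀ c, ρ (φ c) = c := fun c => by
    rw [hρapp, hθφ, ← hσe]
    exact σe.symm_apply_apply c
  have hρD : ∀ x : A × B, x ∈ D → ρ x = 0 := fun x hx => by
    rw [hρapp, show θ x = 0 from hx, map_zero]
  set π : A × B →ₗ[R] A × B := LinearMap.id - φ.comp ρ with hπdef
  have hπapp : ∀ x, π x = x - φ (ρ x) := fun _ => rfl
  have hπmem : ∀ x, π x ∈ D := fun x => by
    rw [LinearMap.mem_ker, hπapp, map_sub, hθφ, hρapp, hσeσ, sub_self]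
  set q : A × B →ₗ[R] ↥D := LinearMap.codRestrict D π hπmem with hqdef
  have hqapp : ∀ x, (q x : A × B) = x - φ (ρ x) := fun _ => rfl
  -- injection B → D
  set jB : B →ₗ[R] ↥D := q.comp (LinearMap.inr R A B) with hjBdef
  have hjBinj : Function.Injective jB := by
    rw [← LinearMap.ker_eq_bot, eq_bot_iff]
    intro b hker
    rw [LinearMap.mem_ker] at hker
    have h0 : ((0 : A), b) - φ (ρ (0, b)) = 0 := by
      have := congrArg (fun z : ↥D => (z : A × B)) hker
      simpa [hjBdef, hqapp] using this
    rw [sub_eq_zero] at h0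
    have hfc : f (ρ ((0 : A), b)) = 0 := by
      have := congrArg Prod.fst h0
      rw [hφapp] at this
      exact this.symm
    have hc0 : ρ ((0 : A), b) = 0 := hf (by rw [hfc, map_zero])
    rw [hc0, map_zero] at h0
    have hb : b = 0 := (Prod.ext_iff.1 h0).2
    rw [Submodule.mem_bot]
    exact hb
  -- surjection A → D
  set eAmap : A →ₗ[R] ↥D := q.comp (LinearMap.inl R A B) with heAdef
  have heAsurj : Function.Surjective eAmap := by
    rintro ⟨⟨a, b⟩, hab⟩
    obtain ⟨c, hc⟩ := hp b
    refine ⟨a - f c, Subtype.ext ?_⟩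
    have hkey : ((a - f c : A), (0 : B)) = ((a, b) : A × B) - φ c := by
      rw [hφapp, Prod.ext_iff]
      constructor
      · rfl
      · show (0 : B) = b - p c
        rw [hc, sub_self]
    show ((a - f c : A), (0 : B)) - φ (ρ (a - f c, 0)) = ((a, b) : A × B)
    rw [hkey, map_sub, hρD _ hab, hρφ, zero_sub, map_neg, sub_neg_eq_add]
    abel
  exact ⟨↥D, inferInstance, inferInstance,
    ⟨isUniform_of_injective hDne πB hπBinj hB.1,
     isCouniform_of_surjective hDne eAmap heAsurj hA.2⟩,
    ⟨(LinearEquiv.ofBijective Ψ ⟨hΨinj, hΨsurj⟩).symm⟩,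
    ⟨⟨πB, hπBinj⟩, jB, hjBinj⟩, ⟨πA, hπAsurj⟩, eAmap, heAsurj⟩
end

section
/- Let p be a prime and let ℤ(p^∞) denote the Prüfer p-group, realized as the p-primary component of ℚ/ℤ (the subgroup of ℚ/ℤ of elements annihilated by some power of p). Then the abelian groups ℚ × ∏_{n∈ℕ} ℤ(p^∞) and ∏_{n∈ℕ} ℤ(p^∞) (a countably infinite direct product of copies of ℤ(p^∞)) are isomorphic. -/
/-- The group `ℚ/ℤ`, the quotient of the rationals by the integers. -/
abbrev RatModInt : Type := ℚ ⧸ AddSubgroup.zmultiples (1 : ℚ)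

/-- The Prüfer `p`-group `ℤ(p^∞)`, realized as the `p`-primary component of `ℚ/ℤ`,
i.e. the subgroup of elements annihilated by some power of `p`. -/
def PruferGroup (p : ℕ) [Fact p.Prime] : AddSubgroup RatModInt :=
  AddCommGroup.primaryComponent RatModInt p

lemma mk_eq_zero_iff {q : ℚ} :
    (QuotientAddGroup.mk q : RatModInt) = 0 ↔ ∃ z : ℤ, (z : ℚ) = q := by
  rw [QuotientAddGroup.eq_zero_iff, AddSubgroup.mem_zmultiples_iff]
  simp

lemma mem_prufer_of_nsmul (p : ℕ) [hp : Fact p.Prime] {x : RatModInt} (n : ℕ)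
    (h : p ^ n • x = 0) : x ∈ PruferGroup p := by
  obtain ⟨k, _, hk⟩ := (Nat.dvd_prime_pow hp.out).mp (addOrderOf_dvd_of_nsmul_eq_zero h)
  exact ⟨n, h⟩

lemma exists_mul_modeq (m N : ℕ) (hN : N ≠ 0) (h : Nat.Coprime m N) :
    ∃ u : ℕ, (m * u) ≡ 1 [MOD N] := by
  haveI : NeZero N := ⟨hN⟩
  refine ⟨((m : ZMod N)⁻¹).val, (ZMod.natCast_eq_natCast_iff _ 1 N).mp ?_⟩
  push_cast
  rw [ZMod.natCast_val, ZMod.cast_id]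
  simpa using ZMod.coe_mul_inv_eq_one m h

lemma prufer_nsmul_surj (p : ℕ) [hp : Fact p.Prime] (n : ℕ) (hn : n ≠ 0)
    (a : PruferGroup p) : ∃ b : PruferGroup p, n • b = a := by
  obtain ⟨x, hx⟩ := a
  suffices h : ∃ y : RatModInt, y ∈ PruferGroup p ∧ n • y = x by
    obtain ⟨y, hy, hyx⟩ := h
    exact ⟨⟨y, hy⟩, Subtype.ext (by simpa using hyx)⟩
  obtain ⟨k, hk⟩ := hx
  have hxk : p ^ k • x = 0 := by rw [← hk]
  have hppos : (0:ℚ) < (p:ℚ) := by exact_mod_cast hp.out.pos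
  have hpne : (p:ℚ) ≠ 0 := ne_of_gt hppos
  induction x using QuotientAddGroup.induction_on with
  | H q =>
    -- get the integer c with p^k * q = c
    have h1 : ((p ^ k • q : ℚ) : RatModInt) = 0 := by
      rw [← hxk]; rfl
    obtain ⟨c, hc⟩ := mk_eq_zero_iff.mp h1
    have hq : (p:ℚ) ^ k * q = c := by
      rw [hc]; push_cast; ring
    -- decompose n
    set α := n.factorization p with hα
    set m := n / p ^ α with hm
    have hnm : p ^ α * m = n := Nat.ordProj_mul_ordCompl_eq_self n p
    have hmd : ¬ p ∣ m := Nat.not_dvd_ordCompl hp.out hn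
    have hm0 : m ≠ 0 := fun h0 => hmd (h0 ▸ dvd_zero p)
    have hN : p ^ (k + α) ≠ 0 := pow_ne_zero _ hp.out.ne_zero
    have hco : Nat.Coprime m (p ^ (k + α)) :=
      ((hp.out.coprime_iff_not_dvd.mpr hmd).symm).pow_right _
    obtain ⟨u, hmu⟩ := exists_mul_modeq m _ hN hco
    obtain ⟨t, ht⟩ : ∃ t : ℤ, ((m * u : ℕ) : ℤ) - 1 = (p:ℤ) ^ (k + α) * t := by
      have h2 : ((p ^ (k + α) : ℕ) : ℤ) ∣ (1 : ℤ) - ((m * u : ℕ) : ℤ) := hmu.dvd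
      obtain ⟨t', ht'⟩ := h2
      exact ⟨-t', by push_cast at ht' ⊢; linarith⟩
    refine ⟨((u : ℚ) * c / (p:ℚ) ^ (k + α) : ℚ), ?_, ?_⟩
    · apply mem_prufer_of_nsmul p (k + α)
      have : (p:ℕ) ^ (k+α) • ((u : ℚ) * c / (p:ℚ) ^ (k + α)) = ((u * c : ℤ) : ℚ) := by
        rw [nsmul_eq_mul]
        push_cast
        field_simp
      rw [show ((p:ℕ)^(k+α) • (((u : ℚ) * c / (p:ℚ) ^ (k + α) : ℚ) : RatModInt))
            = (((p:ℕ)^(k+α) • ((u : ℚ) * c / (p:ℚ) ^ (k + α)) : ℚ) : RatModInt) from rfl, this]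
      exact mk_eq_zero_iff.mpr ⟨u * c, rfl⟩
    · rw [show (n • (((u : ℚ) * c / (p:ℚ) ^ (k + α) : ℚ) : RatModInt))
            = (((n : ℕ) • ((u : ℚ) * c / (p:ℚ) ^ (k + α)) : ℚ) : RatModInt) from rfl]
      rw [← sub_eq_zero, show ((((n : ℕ) • ((u : ℚ) * c / (p:ℚ) ^ (k + α)) : ℚ) : RatModInt)
            - (q : RatModInt)) = ((((n : ℕ) • ((u : ℚ) * c / (p:ℚ) ^ (k + α)) - q : ℚ)) : RatModInt) from rfl]
      apply mk_eq_zero_iff.mpr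
      refine ⟨p ^ α * t * c, ?_⟩
      have hmuQ : (m:ℚ) * u = 1 + (p:ℚ) ^ (k + α) * t := by
        have : ((m * u : ℕ) : ℤ) = 1 + (p:ℤ) ^ (k+α) * t := by linarith [ht]
        exact_mod_cast congrArg (fun z : ℤ => (z : ℚ)) this
      have hnQ : (n : ℚ) = (p:ℚ) ^ α * m := by
        rw [← hnm]; push_cast; ring
      have hqv : q = (c : ℚ) / (p:ℚ) ^ k := by
        field_simp at hq ⊢; linarith [hq]
      rw [nsmul_eq_mul, hnQ, hqv]
      push_cast
      field_simp
      linear_combination (-(c:ℚ) * (p:ℚ) ^ k * (p:ℚ) ^ α) * hmuQ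

lemma prufer_zsmul_surj (p : ℕ) [hp : Fact p.Prime] (n : ℤ) (hn : n ≠ 0)
    (a : PruferGroup p) : ∃ b : PruferGroup p, n • b = a := by
  have hna : n.natAbs ≠ 0 := Int.natAbs_ne_zero.mpr hn
  obtain ⟨b, hb⟩ := prufer_nsmul_surj p n.natAbs hna a
  rcases Int.natAbs_eq n with h | h
  · exact ⟨b, by rw [h, natCast_zsmul, hb]⟩
  · exact ⟨-b, by rw [h, neg_zsmul, natCast_zsmul, smul_neg, neg_neg, hb]⟩

noncomputable instance pruferDivisible (p : ℕ) [Fact p.Prime] :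
    DivisibleBy (PruferGroup p) ℤ where
  div a n := if h : n = 0 then 0 else (prufer_zsmul_surj p n h a).choose
  div_zero a := by simp
  div_cancel a hn := by
    simp only [dif_neg hn]
    exact (prufer_zsmul_surj p _ hn a).choose_spec

/-- rationals with `p`-power denominator -/
def pPow (p : ℕ) [Fact p.Prime] : AddSubgroup ℚ where
  carrier := {q | ∃ (k : ℕ) (c : ℤ), (p:ℚ) ^ k * q = c}
  zero_mem' := ⟨0, 0, by simp⟩
  add_mem' := by
    rintro q₁ q₂ ⟨k₁, c₁, h₁⟩ ⟨k₂, c₂, h₂⟩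
    refine ⟨k₁ + k₂, p ^ k₂ * c₁ + p ^ k₁ * c₂, ?_⟩
    push_cast
    linear_combination (p:ℚ) ^ k₂ * h₁ + (p:ℚ) ^ k₁ * h₂
  neg_mem' := by
    rintro q ⟨k, c, h⟩
    exact ⟨k, -c, by push_cast; linarith⟩

lemma mk_mem_prufer (p : ℕ) [Fact p.Prime] (q : pPow p) :
    (QuotientAddGroup.mk (q : ℚ) : RatModInt) ∈ PruferGroup p := by
  obtain ⟨q, k, c, h⟩ := q
  apply mem_prufer_of_nsmul p k
  have : ((p:ℕ) ^ k • (q : ℚ) : ℚ) = (c : ℚ) := by rw [nsmul_eq_mul]; push_cast; linarith [h]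
  rw [show ((p:ℕ) ^ k • (QuotientAddGroup.mk q : RatModInt))
      = (QuotientAddGroup.mk ((p:ℕ) ^ k • q) : RatModInt) from rfl, this]
  exact mk_eq_zero_iff.mpr ⟨c, rfl⟩

/-- the natural map `S → ℤ(p^∞)` -/
def f0 (p : ℕ) [Fact p.Prime] : pPow p →+ PruferGroup p :=
  AddMonoidHom.codRestrict
    ((QuotientAddGroup.mk' (AddSubgroup.zmultiples (1:ℚ))).comp (pPow p).subtype)
    _ (fun q => mk_mem_prufer p q)

lemma exists_f (p : ℕ) [Fact p.Prime] :
    ∃ f : ℚ →+ PruferGroup p, f.comp (pPow p).subtype = f0 p :=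
  Module.Baer.extension_property_addMonoidHom (Module.Baer.of_divisible _)
    (pPow p).subtype Subtype.coe_injective (f0 p)

lemma exists_emb (p : ℕ) [hp : Fact p.Prime] :
    ∃ i : ℚ →+ ((n : ℕ) → PruferGroup p), Function.Injective i := by
  obtain ⟨f, hf⟩ := exists_f p
  have hppos : (1:ℚ) < (p:ℚ) := by exact_mod_cast hp.out.one_lt
  have hpne : (p:ℚ) ≠ 0 := by positivity
  refine ⟨AddMonoidHom.mk' (fun q n => f (q / (p:ℚ) ^ n)) ?_, ?_⟩
  · intro a b; funext n; simp [add_div]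
  · rw [injective_iff_map_eq_zero]
    intro q hq0
    have hq0' : ∀ n : ℕ, f (q / (p:ℚ) ^ n) = 0 := fun n => congrFun hq0 n
    by_contra hqne
    -- prime-to-p part of the denominator
    set e := (q.den).factorization p with he
    set d := q.den / p ^ e with hd
    have hde : p ^ e * d = q.den := Nat.ordProj_mul_ordCompl_eq_self q.den p
    have hdd : ¬ p ∣ d := Nat.not_dvd_ordCompl hp.out q.den_nz
    have hd0 : d ≠ 0 := fun h0 => hdd (h0 ▸ dvd_zero p)
    have hden : ((q.den : ℚ)) * q = q.num := by
      rw [mul_comm]; exact_mod_cast Rat.mul_den_eq_num q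
    -- r n ∈ pPow
    have hrmem : ∀ n : ℕ, ((d:ℚ) * q / (p:ℚ) ^ n) ∈ pPow p := by
      intro n
      refine ⟨n + e, q.num, ?_⟩
      have : ((p:ℚ) ^ e * d) = (q.den : ℚ) := by exact_mod_cast congrArg (Nat.cast : ℕ → ℚ) hde
      field_simp
      linear_combination ((p:ℚ)^n * q) * this + (p:ℚ)^n * hden
    -- f at r n is 0 but also equals mk (r n)
    have key : ∀ n : ℕ, ∃ z : ℤ, (z : ℚ) = (d:ℚ) * q / (p:ℚ) ^ n := by
      intro n
      have h1 : f ((d:ℚ) * q / (p:ℚ) ^ n) = d • f (q / (p:ℚ) ^ n) := by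
        rw [← map_nsmul]
        congr 1
        rw [nsmul_eq_mul, mul_div_assoc]
      have h2 : f ((d:ℚ) * q / (p:ℚ) ^ n) = f0 p ⟨_, hrmem n⟩ := by
        rw [← hf]; rfl
      have h3 : f0 p ⟨_, hrmem n⟩ = 0 := by
        rw [← h2, h1, hq0' n, smul_zero]
      have h4 : (QuotientAddGroup.mk ((d:ℚ) * q / (p:ℚ) ^ n) : RatModInt) = 0 := by
        have := congrArg (Subtype.val) h3
        exact this
      exact mk_eq_zero_iff.mp h4
    -- contradiction for large n
    obtain ⟨n, hn⟩ := pow_unbounded_of_one_lt (|(d:ℚ) * q|) hppos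
    obtain ⟨z, hz⟩ := key n
    have hpn : (0:ℚ) < (p:ℚ) ^ n := by positivity
    have hzq : (d:ℚ) * q = z * (p:ℚ) ^ n := by
      field_simp at hz; linarith [hz]
    have hz0 : z = 0 := by
      by_contra hz0
      have h1 : (1:ℚ) ≤ |(z:ℚ)| := by
        have : (1:ℤ) ≤ |z| := Int.one_le_abs (by exact_mod_cast hz0)
        exact_mod_cast this
      have : (p:ℚ) ^ n ≤ |(d:ℚ) * q| := by
        rw [hzq, abs_mul, abs_of_pos hpn]
        nlinarith [abs_nonneg ((z:ℚ))]
      linarith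
    have : (d:ℚ) * q = 0 := by rw [hzq, hz0]; simp
    have : q = 0 := by
      rcases mul_eq_zero.mp this with h | h
      · exact absurd (by exact_mod_cast h) hd0
      · exact h
    exact hqne this


/-- cons equivalence -/
def consAddEquiv {A : Type*} [AddCommGroup A] : (A × (ℕ → A)) ≃+ (ℕ → A) where
  toFun z n := match n with | 0 => z.1 | (k+1) => z.2 k
  invFun f := (f 0, fun n => f (n+1))
  left_inv z := rfl
  right_inv f := funext fun n => by cases n <;> rfl
  map_add' a b := funext fun n => by cases n <;> rfl

/-- product of pi types -/
def prodPiAddEquiv {A B : Type*} [AddCommGroup A] [AddCommGroup B] :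
    (ℕ → A × B) ≃+ (ℕ → A) × (ℕ → B) where
  toFun f := (fun n => (f n).1, fun n => (f n).2)
  invFun g n := (g.1 n, g.2 n)
  left_inv f := rfl
  right_inv g := rfl
  map_add' f g := rfl

/-- curry -/
def curryAddEquiv {A : Type*} [AddCommGroup A] : ((ℕ × ℕ) → A) ≃+ (ℕ → ℕ → A) :=
  { Equiv.curry ℕ ℕ A with map_add' := fun _ _ => rfl }

/-- squaring equivalence for countable powers -/
def piNatSelf {A : Type*} [AddCommGroup A] : (ℕ → (ℕ → A)) ≃+ (ℕ → A) :=
  curryAddEquiv.symm.trans (AddEquiv.arrowCongr (Denumerable.eqv (ℕ × ℕ)) (AddEquiv.refl A))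

lemma swindle {B C : Type*} [AddCommGroup B] [AddCommGroup C]
    (h1 : B ≃+ ℚ × C) : Nonempty ((ℚ × (ℕ → B)) ≃+ (ℕ → B)) := by
  refine ⟨?_⟩
  exact
    (AddEquiv.prodCongr (AddEquiv.refl ℚ) (AddEquiv.piCongrRight fun _ => h1)).trans <|
    (AddEquiv.prodCongr (AddEquiv.refl ℚ) prodPiAddEquiv).trans <|
    (AddEquiv.prodAssoc : (ℚ × (ℕ → ℚ)) × (ℕ → C) ≃+ ℚ × ((ℕ → ℚ) × (ℕ → C))).symm.trans <|
    (AddEquiv.prodCongr consAddEquiv (AddEquiv.refl (ℕ → C))).trans <|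
    prodPiAddEquiv.symm.trans <|
    AddEquiv.piCongrRight fun _ => h1.symm

/-- split off a copy of ℚ from a retraction -/
def splitEquiv {B : Type*} [AddCommGroup B] (i : ℚ →+ B) (r : B →+ ℚ)
    (hri : ∀ q, r (i q) = q) : B ≃+ ℚ × r.ker where
  toFun x := (r x, ⟨x - i (r x), by simp [AddMonoidHom.mem_ker, map_sub, hri]⟩)
  invFun z := i z.1 + (z.2 : B)
  left_inv x := by simp
  right_inv z := by
    obtain ⟨q, c, hc⟩ := z
    have hc' : r c = 0 := hc
    ext
    · simp [hc', hri]
    · simp [hc', hri]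
  map_add' x y := by
    ext
    · simp
    · simp only [Prod.snd_add, AddSubgroup.coe_add, Subtype.ext_iff, AddSubgroup.coe_mk]
      push_cast
      simp [map_add]
      abel


/-- `ℚ × ∏_{n ∈ ℕ} ℤ(p^∞)` is isomorphic to `∏_{n ∈ ℕ} ℤ(p^∞)`. -/
theorem rat_prod_pi_prufer_equiv_pi_prufer (p : ℕ) [Fact p.Prime] :
    Nonempty ((ℚ × ((n : ℕ) → PruferGroup p)) ≃+ ((n : ℕ) → PruferGroup p)) := by
  obtain ⟨i, hi⟩ := exists_emb p
  obtain ⟨r, hr⟩ := Module.Baer.extension_property_addMonoidHom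
    (Module.Baer.of_divisible ℚ) i hi (AddMonoidHom.id ℚ)
  have hri : ∀ q, r (i q) = q := fun q => DFunLike.congr_fun hr q
  obtain ⟨sw⟩ := swindle (splitEquiv i r hri)
  exact ⟨(AddEquiv.prodCongr (AddEquiv.refl ℚ) piNatSelf.symm).trans (sw.trans piNatSelf)⟩
end

section
/- Let p be a prime and let ℤ(p^∞) denote the Prüfer p-group, realized as the p-primary component of ℚ/ℤ. Then the countably infinite direct product ∏_{n∈ℕ} ℤ(p^∞) contains a free abelian subgroup of countably infinite rank; equivalently, there exists an injective group homomorphism from the free abelian group ⨁_{t∈ℕ} ℤ into ∏_{n∈ℕ} ℤ(p^∞). In particular, the divisible abelian group ∏_{n∈ℕ} ℤ(p^∞) has infinite torsion-free rank. -/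
/-- Key arithmetic lemma: if all the "partial sums" `∑ c t / p^((n+1)(t+1))` are integers,
then all coefficients vanish. -/
theorem prufer_key (p : ℕ) (hp : p.Prime) (c : ℕ →₀ ℤ)
    (H : ∀ n : ℕ, ∃ m : ℤ, ∑ t ∈ c.support, (c t : ℚ) / (p : ℚ) ^ ((n + 1) * (t + 1)) = m) :
    c = 0 := by
  by_contra hc
  have hs : c.support.Nonempty := Finsupp.support_nonempty_iff.mpr hc
  set T := c.support.max' hs with hT
  have hTmem : T ∈ c.support := c.support.max'_mem hs
  have hcT : c T ≠ 0 := Finsupp.mem_support_iff.mp hTmem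
  have hple : ∀ t ∈ c.support, t ≤ T := fun t ht => c.support.le_max' t ht
  have hp0 : (p : ℚ) ≠ 0 := by exact_mod_cast hp.ne_zero
  -- for every n, p^(n+1) divides c T
  have hdvd : ∀ n : ℕ, (p : ℤ) ^ (n + 1) ∣ c T := by
    intro n
    obtain ⟨m, hm⟩ := H n
    set A := (n + 1) * (T + 1) with hA
    -- multiply through by p^A
    have hint : ∑ t ∈ c.support, c t * (p : ℤ) ^ (A - (n + 1) * (t + 1)) = m * (p : ℤ) ^ A := by
      have := congrArg (fun x : ℚ => x * (p : ℚ) ^ A) hm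
      simp only [Finset.sum_mul] at this
      have heq : ∀ t ∈ c.support,
          (c t : ℚ) / (p : ℚ) ^ ((n + 1) * (t + 1)) * (p : ℚ) ^ A
            = ((c t * (p : ℤ) ^ (A - (n + 1) * (t + 1)) : ℤ) : ℚ) := by
        intro t ht
        have hle : (n + 1) * (t + 1) ≤ A := by
          have := hple t ht
          exact Nat.mul_le_mul_left _ (by omega)
        rw [div_mul_eq_mul_div, div_eq_iff (pow_ne_zero _ hp0)]
        push_cast
        rw [mul_assoc, ← pow_add]
        congr 2
        omega
      rw [Finset.sum_congr rfl heq] at this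
      exact_mod_cast this
    -- isolate the T term
    rw [← Finset.add_sum_erase _ _ hTmem] at hint
    have h0 : A - (n + 1) * (T + 1) = 0 := by omega
    rw [h0, pow_zero, mul_one] at hint
    have h1 : (p : ℤ) ^ (n + 1) ∣ ∑ t ∈ c.support.erase T,
        c t * (p : ℤ) ^ (A - (n + 1) * (t + 1)) := by
      refine Finset.dvd_sum fun t ht => ?_
      have htT : t ≠ T := Finset.ne_of_mem_erase ht
      have htle : t ≤ T := hple t (Finset.mem_of_mem_erase ht)
      have : n + 1 ≤ A - (n + 1) * (t + 1) := by
        have htlt : t < T := lt_of_le_of_ne htle htT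
        have : (n + 1) * (t + 1) + (n + 1) ≤ A := by
          rw [hA]; nlinarith
        omega
      exact Dvd.dvd.mul_left (pow_dvd_pow _ this) _
    have h2 : (p : ℤ) ^ (n + 1) ∣ m * (p : ℤ) ^ A := by
      refine Dvd.dvd.mul_left (pow_dvd_pow _ ?_) _
      calc n + 1 = (n + 1) * 1 := by ring
        _ ≤ (n + 1) * (T + 1) := Nat.mul_le_mul_left _ (by omega)
    have : c T = m * (p : ℤ) ^ A - ∑ t ∈ c.support.erase T,
        c t * (p : ℤ) ^ (A - (n + 1) * (t + 1)) := by linarith [hint]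
    rw [this]
    exact dvd_sub h2 h1
  -- conclude c T = 0
  obtain ⟨n, hn⟩ := pow_unbounded_of_one_lt (c T).natAbs (by exact_mod_cast hp.one_lt : 1 < p)
  refine hcT (Int.eq_zero_of_dvd_of_natAbs_lt_natAbs (hdvd n) ?_)
  rw [Int.natAbs_pow, Int.natAbs_natCast]
  exact hn.trans_le (Nat.pow_le_pow_right hp.one_le (by omega))

/-- The generator family: `gen p t` has `n`-th component `1 / p^((n+1)(t+1)) + ℤ`. -/
noncomputable def pruferGen (p : ℕ) [Fact p.Prime] (t : ℕ) : (n : ℕ) → PruferGroup p :=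
  fun n => ⟨QuotientAddGroup.mk' _ (1 / (p : ℚ) ^ ((n + 1) * (t + 1))), by
    have hp := Fact.out (p := p.Prime)
    have hp0 : (p : ℚ) ≠ 0 := by exact_mod_cast hp.ne_zero
    refine (⟨(n + 1) * (t + 1), ?_⟩ : ∃ k : ℕ, p ^ k • (QuotientAddGroup.mk' (AddSubgroup.zmultiples (1 : ℚ)) (1 / (p : ℚ) ^ ((n + 1) * (t + 1)))) = 0)
    rw [← map_nsmul, QuotientAddGroup.mk'_apply, QuotientAddGroup.eq_zero_iff]
    refine ⟨1, ?_⟩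
    push_cast
    simp only [one_smul, nsmul_eq_mul]; push_cast; field_simp⟩

/-- The countably infinite direct product `∏_{n ∈ ℕ} ℤ(p^∞)` contains a free abelian
subgroup of countably infinite rank: there is an injective homomorphism from the free
abelian group `⨁_{t ∈ ℕ} ℤ` into the product. -/
theorem pi_prufer_contains_free_abelian_of_infinite_rank (p : ℕ) [Fact p.Prime] :
    ∃ f : (ℕ →₀ ℤ) →+ ((n : ℕ) → PruferGroup p), Function.Injective f := by
  have hp := Fact.out (p := p.Prime)
  refine ⟨Finsupp.liftAddHom (fun t => zmultiplesHom _ (pruferGen p t)), ?_⟩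
  rw [injective_iff_map_eq_zero]
  intro c hc
  have H : ∀ n : ℕ, ∃ m : ℤ, ∑ t ∈ c.support, (c t : ℚ) / (p : ℚ) ^ ((n + 1) * (t + 1)) = m := by
    intro n
    have hcn : (∑ t ∈ c.support, c t • pruferGen p t) n = 0 := by
      have : Finsupp.liftAddHom (M := ℤ) (N := (n : ℕ) → PruferGroup p)
          (fun t => zmultiplesHom _ (pruferGen p t)) c
          = ∑ t ∈ c.support, c t • pruferGen p t := by
        rw [Finsupp.liftAddHom_apply]
        rfl
      rw [this] at hc
      rw [hc]; rfl
    rw [Finset.sum_apply] at hcn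
    have hval : ((∑ t ∈ c.support, (c t • pruferGen p t) n : PruferGroup p) : RatModInt) = 0 := by
      rw [hcn]; rfl
    push_cast at hval
    have : (QuotientAddGroup.mk' (AddSubgroup.zmultiples (1 : ℚ)))
        (∑ t ∈ c.support, c t • (1 / (p : ℚ) ^ ((n + 1) * (t + 1)))) = 0 := by
      rw [map_sum]
      simpa [pruferGen, map_zsmul] using hval
    rw [QuotientAddGroup.mk'_apply, QuotientAddGroup.eq_zero_iff] at this
    obtain ⟨m, hm⟩ := this
    refine ⟨m, ?_⟩
    have hm' : (m : ℚ) = ∑ t ∈ c.support, c t • (1 / (p : ℚ) ^ ((n + 1) * (t + 1))) := by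
      rw [← hm]; simp
    rw [hm']
    exact Finset.sum_congr rfl fun t _ => by rw [zsmul_eq_mul, mul_one_div]
  exact prufer_key p hp c H
end

section
/- Let R be a Dedekind domain that is not a field, with field of fractions K. For each maximal ideal P of R, let R_P denote the localization of R at P, regarded as the subring {x ∈ K : x = a/s for some a ∈ R and s ∈ R \ P} of K. Then an element (x_P + R_P)_P of the R-module ∏_P K/R_P, where P ranges over all maximal ideals of R, is a torsion element if and only if x_P ∈ R_P for all but finitely many maximal ideals P; that is, the torsion submodule of ∏_P K/R_P is exactly ⨁_P K/R_P. -/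
open nonZeroDivisors

variable {R : Type*} [CommRing R] [IsDomain R] [IsDedekindDomain R]
  {K : Type*} [Field K] [Algebra R K] [IsFractionRing R K]

/-- The localization `R_P` of `R` at a maximal ideal `P`, regarded as an `R`-submodule
(in fact a subring) of the fraction field `K`: the set of elements of `K` of the form
`a/s` with `a ∈ R` and `s ∈ R \ P`. -/
noncomputable def localizationAt (P : Ideal R) (hP : P.IsMaximal) : Submodule R K :=
  haveI : P.IsPrime := hP.isPrime
  Subalgebra.toSubmodule
    (Localization.subalgebra K P.primeCompl
      (fun x hx => mem_nonZeroDivisors_of_ne_zero fun h0 => hx (h0 ▸ P.zero_mem)))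

theorem mem_localizationAt_iff (P : Ideal R) (hP : P.IsMaximal) (z : K) :
    z ∈ localizationAt (K := K) P hP ↔
      ∃ (a s : R) (_ : s ∈ P.primeCompl), z = algebraMap R K a / algebraMap R K s := by
  haveI : P.IsPrime := hP.isPrime
  have hle : P.primeCompl ≤ R⁰ :=
    fun x hx => mem_nonZeroDivisors_of_ne_zero fun h0 => hx (h0 ▸ P.zero_mem)
  show z ∈ Localization.subalgebra K P.primeCompl hle ↔ _
  rw [Localization.subalgebra, ← SetLike.mem_coe, Subalgebra.coe_copy, Set.mem_setOf_eq]
  constructor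
  · rintro ⟨a, s, hs, rfl⟩
    exact ⟨a, s, hs, by rw [IsFractionRing.mk'_eq_div]⟩
  · rintro ⟨a, s, hs, rfl⟩
    exact ⟨a, s, hs, by rw [IsFractionRing.mk'_eq_div]⟩

theorem algebraMap_mem_localizationAt (P : Ideal R) (hP : P.IsMaximal) (a : R) :
    algebraMap R K a ∈ localizationAt (K := K) P hP := by
  rw [mem_localizationAt_iff]
  exact ⟨a, 1, P.primeCompl.one_mem, by simp⟩

theorem mem_localizationAt_of_smul_mem (P : Ideal R) (hP : P.IsMaximal) {r : R}
    (hr : r ∉ P) {z : K} (h : r • z ∈ localizationAt (K := K) P hP) :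
    z ∈ localizationAt (K := K) P hP := by
  rw [mem_localizationAt_iff] at h ⊢
  obtain ⟨a, s, hs, hz⟩ := h
  refine ⟨a, s * r, P.primeCompl.mul_mem hs hr, ?_⟩
  have hr0 : algebraMap R K r ≠ 0 := by
    simpa using (IsFractionRing.injective R K).ne_iff.2
      (fun h0 : r = 0 => hr (h0 ▸ P.zero_mem))
  have hs0 : algebraMap R K s ≠ 0 := by
    simpa using (IsFractionRing.injective R K).ne_iff.2
      (fun h0 : s = 0 => hs (h0 ▸ P.zero_mem))
  rw [Algebra.smul_def] at hz
  rw [map_mul]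
  field_simp at hz ⊢
  linear_combination hz

/-- Over a Dedekind domain `R` that is not a field, with fraction field `K`, an element of
`∏_P K/R_P` (product over all maximal ideals `P`) is torsion if and only if all but finitely
many of its components vanish, i.e. the torsion submodule of `∏_P K/R_P` is `⨁_P K/R_P`. -/
theorem pi_fractionField_mod_localization_torsion_iff_finite_support
    (hR : ¬IsField R)
    (x : (P : {P : Ideal R // P.IsMaximal}) → K ⧸ localizationAt (K := K) P.1 P.2) :
    (∃ r : R, r ≠ 0 ∧ r • x = 0) ↔ {P : {P : Ideal R // P.IsMaximal} | x P ≠ 0}.Finite := by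
  constructor
  · rintro ⟨r, hr0, hrx⟩
    have hfin : {v : IsDedekindDomain.HeightOneSpectrum R | v.asIdeal ∣ Ideal.span {r}}.Finite :=
      Ideal.finite_factors (by simpa using hr0)
    have key : ∀ P : {P : Ideal R // P.IsMaximal}, x P ≠ 0 → r ∈ P.1 := by
      intro P hxP
      by_contra hrP
      obtain ⟨y, hy⟩ := Submodule.Quotient.mk_surjective _ (x P)
      have : r • (Submodule.Quotient.mk y : K ⧸ localizationAt (K := K) P.1 P.2) = 0 := by
        rw [hy]; exact congrFun hrx P
      rw [← Submodule.Quotient.mk_smul, Submodule.Quotient.mk_eq_zero] at this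
      refine hxP ?_
      rw [← hy, Submodule.Quotient.mk_eq_zero]
      exact mem_localizationAt_of_smul_mem P.1 P.2 hrP this
    refine Set.Finite.of_finite_image (f := fun P =>
      (⟨P.1, P.2.isPrime, Ring.ne_bot_of_isMaximal_of_not_isField P.2 hR⟩ :
        IsDedekindDomain.HeightOneSpectrum R)) (hfin.subset ?_) ?_
    · rintro v ⟨P, hP, rfl⟩
      exact Ideal.dvd_span_singleton.2 (key P hP)
    · intro P _ Q _ h
      exact Subtype.ext (congrArg IsDedekindDomain.HeightOneSpectrum.asIdeal h)
  · intro hfin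
    classical
    have hlift : ∀ P : {P : Ideal R // P.IsMaximal}, ∃ y : K,
        Submodule.Quotient.mk y = x P := fun P => Submodule.Quotient.mk_surjective _ (x P)
    choose y hy using hlift
    have hd : ∀ P : {P : Ideal R // P.IsMaximal}, ∃ d : R, d ≠ 0 ∧
        ∃ a : R, d • y P = algebraMap R K a := by
      intro P
      obtain ⟨⟨a, s⟩, hs⟩ := IsLocalization.surj R⁰ (y P)
      exact ⟨s.1, nonZeroDivisors.coe_ne_zero s, a,
        by rw [Algebra.smul_def, mul_comm]; exact hs⟩
    choose d hd0 a ha using hd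
    refine ⟨∏ P ∈ hfin.toFinset, d P, Finset.prod_ne_zero_iff.2 fun P _ => hd0 P, ?_⟩
    funext P
    by_cases hxP : x P = 0
    · show (∏ Q ∈ hfin.toFinset, d Q) • x P = 0
      rw [hxP, smul_zero]
    · have hP : P ∈ hfin.toFinset := hfin.mem_toFinset.2 hxP
      show (∏ Q ∈ hfin.toFinset, d Q) • x P = 0
      rw [← hy P, ← Submodule.Quotient.mk_smul, Submodule.Quotient.mk_eq_zero]
      rw [← Finset.prod_erase_mul _ _ hP, mul_smul, ha P, Algebra.smul_def, ← map_mul]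
      exact algebraMap_mem_localizationAt P.1 P.2 _
end

section
/- Let p be a prime. Then the abelian groups ℤ_p × ∏_{n≥1} ℤ/p^nℤ and ∏_{n≥1} ℤ/p^nℤ are isomorphic, where ℤ_p is the additive group of the ring of p-adic integers. -/
open Filter Topology PadicInt

namespace PadicProdAux

noncomputable section

variable {p : ℕ} [Fact p.Prime]

/-- A fixed ultrafilter on `ℕ` extending the cofinite filter. -/
def Uf : Ultrafilter ℕ := Ultrafilter.of cofinite

lemma Uf_le_cofinite : ↑Uf ≤ (cofinite : Filter ℕ) := Ultrafilter.of_le _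

/-- The `Uf`-limit of a sequence in the compact space `ℤ_[p]`. -/
def limU (f : ℕ → ℤ_[p]) : ℤ_[p] := (Uf.map f).lim

lemma tendsto_limU (f : ℕ → ℤ_[p]) : Tendsto f ↑Uf (𝓝 (limU f)) := by
  have h := (Uf.map f).le_nhds_lim
  rwa [Ultrafilter.coe_map] at h

lemma limU_eq {f : ℕ → ℤ_[p]} {x : ℤ_[p]} (h : Tendsto f ↑Uf (𝓝 x)) : limU f = x :=
  tendsto_nhds_unique (tendsto_limU f) h

lemma limU_of_cofinite {f : ℕ → ℤ_[p]} {x : ℤ_[p]} (h : Tendsto f cofinite (𝓝 x)) :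
    limU f = x := limU_eq (h.mono_left Uf_le_cofinite)

lemma limU_add (f g : ℕ → ℤ_[p]) : limU (fun n => f n + g n) = limU f + limU g :=
  limU_eq ((tendsto_limU f).add (tendsto_limU g))

/-- The canonical lift of `ZMod (p^n)` to `ℤ_[p]`. -/
def liftZ {n : ℕ} (a : ZMod (p ^ n)) : ℤ_[p] := (a.val : ℤ_[p])

lemma norm_sub_liftZ {n : ℕ} (x : ℤ_[p]) (a : ZMod (p ^ n)) [NeZero (p ^ n)]
    (h : toZModPow n x = a) : ‖x - liftZ a‖ ≤ (p : ℝ) ^ (-(n : ℤ)) := by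
  rw [norm_le_pow_iff_mem_span_pow, ← ker_toZModPow, RingHom.mem_ker, map_sub, h,
    liftZ, map_natCast, ZMod.natCast_zmod_val, sub_self]

lemma tendsto_pow_bound (ν : ℕ → ℕ) (hν : Tendsto ν cofinite atTop) :
    Tendsto (fun m => (p : ℝ) ^ (-((ν m : ℤ) + 1))) cofinite (𝓝 0) := by
  have hp : (1 : ℝ) < p := Nat.one_lt_cast.mpr (Fact.out (p := p.Prime)).one_lt
  have h0 : (0 : ℝ) ≤ (p : ℝ)⁻¹ := by positivity
  have h1 : (p : ℝ)⁻¹ < 1 := inv_lt_one_of_one_lt₀ hp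
  have key : Tendsto (fun k : ℕ => ((p : ℝ)⁻¹) ^ k) atTop (𝓝 0) :=
    tendsto_pow_atTop_nhds_zero_of_lt_one h0 h1
  have hν1 : Tendsto (fun m => ν m + 1) cofinite atTop :=
    tendsto_atTop_mono (fun m => Nat.le_succ (ν m)) hν
  refine (key.comp hν1).congr fun m => ?_
  show ((p : ℝ)⁻¹) ^ (ν m + 1) = (p : ℝ) ^ (-((ν m : ℤ) + 1))
  rw [inv_pow, ← zpow_natCast, ← zpow_neg]
  congr 1

lemma tendsto_lift_toZModPow (x : ℤ_[p]) (ν : ℕ → ℕ) (hν : Tendsto ν cofinite atTop) :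
    Tendsto (fun m => liftZ (toZModPow (ν m + 1) x)) cofinite (𝓝 x) := by
  rw [← tendsto_sub_nhds_zero_iff]
  refine squeeze_zero_norm (a := fun m => (p : ℝ) ^ (-((ν m : ℤ) + 1))) (fun m => ?_)
    (tendsto_pow_bound ν hν)
  rw [norm_sub_rev]
  exact norm_sub_liftZ x _ rfl

/-- pairing -/
def pair : ℕ × ℕ ≃ ℕ := Denumerable.eqv (ℕ × ℕ)

lemma pair_injective (k : ℕ) : Function.Injective (fun m => pair (k, m)) := by
  intro a b h
  simpa using congrArg (fun n => (pair.symm n).2) h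

lemma tendsto_pair (k : ℕ) : Tendsto (fun m => pair (k, m)) cofinite atTop := by
  rw [← Nat.cofinite_eq_atTop]
  exact (pair_injective k).tendsto_cofinite

abbrev Pgrp (p : ℕ) := (n : ℕ) → ZMod (p ^ (n + 1))
abbrev Qgrp (p : ℕ) [Fact p.Prime] := ℕ → ℤ_[p]

/-- the section -/
def sHom : Qgrp p →+ Pgrp p where
  toFun a n := toZModPow (n + 1) (a (pair.symm n).1)
  map_zero' := by funext n; simp
  map_add' a b := by funext n; simp [Pi.add_apply]

/-- the retraction, via ultrafilter limits -/
def rHom : Pgrp p →+ Qgrp p where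
  toFun a k := limU (fun m => liftZ (a (pair (k, m))))
  map_zero' := by
    funext k
    have h : ∀ m : ℕ, liftZ ((0 : Pgrp p) (pair (k, m))) = 0 := by
      intro m; simp [liftZ, ZMod.val_zero]
    show limU _ = 0
    simp only [h]
    exact limU_of_cofinite tendsto_const_nhds
  map_add' a b := by
    funext k
    show limU _ = limU _ + limU _
    rw [← limU_add]
    have hd : Tendsto (fun m => liftZ ((a + b) (pair (k, m))) -
        (liftZ (a (pair (k, m))) + liftZ (b (pair (k, m))))) cofinite (𝓝 0) := by
      refine squeeze_zero_norm (a := fun m => (p : ℝ) ^ (-((pair (k, m) : ℤ) + 1)))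
        (fun m => ?_) (tendsto_pow_bound _ (tendsto_pair k))
      set n := pair (k, m)
      have hmem : liftZ ((a + b) n) - (liftZ (a n) + liftZ (b n)) ∈
          Ideal.span {(p : ℤ_[p]) ^ (n + 1)} := by
        rw [← ker_toZModPow, RingHom.mem_ker]
        simp only [map_sub, map_add, liftZ, map_natCast, ZMod.natCast_zmod_val,
          Pi.add_apply]
        ring
      rw [← norm_le_pow_iff_mem_span_pow] at hmem
      exact hmem
    have h0 : limU (fun m => liftZ ((a + b) (pair (k, m))) -
        (liftZ (a (pair (k, m))) + liftZ (b (pair (k, m))))) = 0 :=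
      limU_of_cofinite hd
    have h2 := limU_add (fun m => liftZ ((a + b) (pair (k, m))) -
        (liftZ (a (pair (k, m))) + liftZ (b (pair (k, m)))))
        (fun m => liftZ (a (pair (k, m))) + liftZ (b (pair (k, m))))
    simp only [sub_add_cancel] at h2
    rw [h2, h0, zero_add]

lemma rHom_sHom (a : Qgrp p) : rHom (sHom a) = a := by
  funext k
  show limU _ = a k
  apply limU_of_cofinite
  have h : (fun m => liftZ ((sHom a : Pgrp p) (pair (k, m)))) =
      fun m => liftZ (toZModPow (pair (k, m) + 1) (a k)) := by
    funext m
    simp [sHom]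
  rw [h]
  exact tendsto_lift_toZModPow (a k) _ (tendsto_pair k)

end

end PadicProdAux

open PadicProdAux in
/-- `ℤ_p × ∏_{n ≥ 1} ℤ/p^nℤ` is isomorphic to `∏_{n ≥ 1} ℤ/p^nℤ` (the factors being
indexed here by `n : ℕ`, the `n`-th factor being `ℤ/p^(n+1)ℤ`), where `ℤ_p` is the
additive group of the ring of `p`-adic integers. -/
theorem padicInt_prod_pi_zmod_equiv_pi_zmod (p : ℕ) [Fact p.Prime] :
    Nonempty ((ℤ_[p] × ((n : ℕ) → ZMod (p ^ (n + 1)))) ≃+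
      ((n : ℕ) → ZMod (p ^ (n + 1)))) := by
  classical
  set K := (rHom (p := p)).ker with hK
  -- P ≃+ Q × K
  let iso1 : Pgrp p ≃+ (Qgrp p × K) :=
    { toFun := fun x => (rHom x, ⟨x - sHom (rHom x), by
        simp [hK, AddMonoidHom.mem_ker, map_sub, rHom_sHom]⟩)
      invFun := fun qk => sHom qk.1 + qk.2.1
      left_inv := fun x => by simp
      right_inv := fun qk => by
        obtain ⟨q, k, hk⟩ := qk
        rw [hK, AddMonoidHom.mem_ker] at hk
        ext
        · simp [map_add, rHom_sHom, hk]
        · simp [map_add, rHom_sHom, hk]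
      map_add' := fun x y => by
        have h : x + y - sHom (rHom (x + y)) = (x - sHom (rHom x)) + (y - sHom (rHom y)) := by
          rw [map_add, map_add]; abel
        exact Prod.ext (map_add rHom x y) (Subtype.ext h) }
  -- ℤ_p × Q ≃+ Q
  let iso2 : (ℤ_[p] × Qgrp p) ≃+ Qgrp p :=
    { toFun := fun xf n => Nat.casesOn n xf.1 (fun m => xf.2 m)
      invFun := fun f => (f 0, fun n => f (n + 1))
      left_inv := fun xf => by ext n <;> rfl
      right_inv := fun f => by funext n; cases n <;> rfl
      map_add' := fun xf yf => by funext n; cases n <;> rfl }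
  exact ⟨(((AddEquiv.refl ℤ_[p]).prodCongr iso1).trans
      ((AddEquiv.prodAssoc (M := ℤ_[p]) (N := Qgrp p) (P := K)).symm.trans
        (iso2.prodCongr (AddEquiv.refl K)))).trans iso1.symm⟩
end

section
/- Let R be a ring and let {A_i : i ∈ I} and {B_j : j ∈ J} be two countable families of slender biuniform right R-modules. If the direct products ∏_{i∈I} A_i and ∏_{j∈J} B_j are isomorphic R-modules, then there exist bijections σ, τ : I → J such that A_i and B_{σ(i)} belong to the same monogeny class and A_i and B_{τ(i)} belong to the same epigeny class for every i ∈ I. -/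
/-- A module `M` is slender if every homomorphism `f : R^ω → M` from the countable direct
product of copies of `R` kills almost all of the canonical unit vectors `eₙ`. -/
def IsSlender (R : Type*) [Ring R] (M : Type*) [AddCommGroup M] [Module R M] : Prop :=
  ∀ f : (ℕ → R) →ₗ[R] M, ∃ n₀ : ℕ, ∀ n ≥ n₀, f (Pi.single n 1) = 0

open IsModularLattice
section ALLINFRA

section LatticeDim
variable {L : Type*} [Lattice L] [BoundedOrder L] [IsModularLattice L]
variable {ι κ : Type*} [DecidableEq ι] [DecidableEq κ]

/-- `x` is a uniform element relative to base `k`. -/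
def RUnif (k x : L) : Prop :=
  k ≤ x ∧ x ≠ k ∧ ∀ y z : L, k ≤ y → y ≤ x → y ≠ k → k ≤ z → z ≤ x → z ≠ k → y ⊓ z ≠ k

/-- a family is independent relative to base `k`. -/
def RIndep (k : L) {ι : Type*} [DecidableEq ι] (t : Finset ι) (u : ι → L) : Prop :=
  (∀ b ∈ t, k ≤ u b) ∧ ∀ b ∈ t, u b ⊓ (k ⊔ (t.erase b).sup u) = k

theorem relSJ {k : L} {s : Finset ι} {u : ι → L} (h : RIndep k s u) :
    ∀ (t₁ t₂ : Finset ι), t₁ ⊆ s → t₂ ⊆ s →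
      (k ⊔ t₁.sup u) ⊓ (k ⊔ t₂.sup u) = k ⊔ (t₁ ∩ t₂).sup u := by
  intro t₁
  induction t₁ using Finset.strongInduction with
  | _ t₁ ih =>
    intro t₂ h₁ h₂
    by_cases hsub : t₁ ⊆ t₂
    · rw [Finset.inter_eq_left.2 hsub]
      exact inf_eq_left.2 (sup_le_sup_left (Finset.sup_mono hsub) k)
    · obtain ⟨a, ha, hat₂⟩ := Finset.not_subset.1 hsub
      set X := k ⊔ (t₁.erase a).sup u with hX
      set U := k ⊔ t₂.sup u with hU
      have hkX : k ≤ X := le_sup_left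
      have haS : a ∈ s := h₁ ha
      have hka : k ≤ u a := h.1 a haS
      have hXa : u a ⊓ (U ⊔ X) = k := by
        have hsub2 : U ⊔ X ≤ k ⊔ (s.erase a).sup u := by
          refine sup_le (sup_le le_sup_left ?_) (sup_le le_sup_left ?_)
          · exact le_sup_of_le_right (Finset.sup_mono (fun x hx =>
              Finset.mem_erase.2 ⟨fun he => hat₂ (he ▸ hx), h₂ hx⟩))
          · exact le_sup_of_le_right (Finset.sup_mono (fun x hx =>
              Finset.mem_erase.2 ⟨(Finset.mem_erase.1 hx).1, h₁ (Finset.mem_of_mem_erase hx)⟩))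
        refine le_antisymm ?_ (le_inf hka (le_trans hkX le_sup_right))
        calc u a ⊓ (U ⊔ X) ≤ u a ⊓ (k ⊔ (s.erase a).sup u) := inf_le_inf_left _ hsub2
          _ = k := h.2 a haS
      have h2 : k ⊔ t₁.sup u = X ⊔ u a := by
        rw [← Finset.insert_erase ha, Finset.sup_insert, hX]
        rw [sup_comm (u a) _, ← sup_assoc]
      have hXle : (X ⊔ u a) ⊓ (U ⊔ X) = X := by
        rw [sup_inf_assoc_of_le (u a) (le_sup_right : X ≤ U ⊔ X), hXa, sup_eq_left.2 hkX]
      have hinter : t₁.erase a ∩ t₂ = t₁ ∩ t₂ := by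
        ext x; simp only [Finset.mem_inter, Finset.mem_erase]
        exact ⟨fun ⟨⟨_, hx⟩, hx2⟩ => ⟨hx, hx2⟩, fun ⟨hx, hx2⟩ => ⟨⟨fun he => hat₂ (he ▸ hx2), hx⟩, hx2⟩⟩
      refine le_antisymm ?_ (le_inf (sup_le_sup_left (Finset.sup_mono Finset.inter_subset_left) k)
        (sup_le_sup_left (Finset.sup_mono Finset.inter_subset_right) k))
      calc (k ⊔ t₁.sup u) ⊓ U = (X ⊔ u a) ⊓ U := by rw [h2]
        _ ≤ ((X ⊔ u a) ⊓ (U ⊔ X)) ⊓ U := le_inf (inf_le_inf_left _ le_sup_left) inf_le_right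
        _ = X ⊓ U := by rw [hXle]
        _ = k ⊔ (t₁ ∩ t₂).sup u := by
            rw [hX, hU, ih (t₁.erase a) (Finset.erase_ssubset ha) t₂
              (fun x hx => h₁ (Finset.mem_of_mem_erase hx)) h₂, hinter]

theorem supK (K : L) (s : Finset ι) (w : ι → L) :
    K ⊔ s.sup (fun b => w b ⊔ K) = K ⊔ s.sup w := by
  induction s using Finset.induction with
  | empty => simp
  | insert a s' h ih =>
    rw [Finset.sup_insert, Finset.sup_insert]
    apply le_antisymm
    · refine sup_le le_sup_left (sup_le (sup_le ?_ le_sup_left) ?_)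
      · exact le_sup_of_le_right le_sup_left
      · calc s'.sup (fun b => w b ⊔ K) ≤ K ⊔ s'.sup (fun b => w b ⊔ K) := le_sup_right
          _ = K ⊔ s'.sup w := ih
          _ ≤ K ⊔ (w a ⊔ s'.sup w) := sup_le le_sup_left (le_sup_of_le_right le_sup_right)
    · refine sup_le le_sup_left (sup_le ?_ ?_)
      · exact le_sup_of_le_right (le_sup_of_le_left le_sup_left)
      · calc s'.sup w ≤ K ⊔ s'.sup w := le_sup_right
          _ = K ⊔ s'.sup (fun b => w b ⊔ K) := ih.symm
          _ ≤ K ⊔ (w a ⊔ K ⊔ s'.sup (fun b => w b ⊔ K)) :=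
              sup_le le_sup_left (le_sup_of_le_right le_sup_right)

theorem rindep_mono {k : L} {s : Finset κ} {v v' : κ → L}
    (h : RIndep k s v) (hle : ∀ a ∈ s, v' a ≤ v a) (hk : ∀ a ∈ s, k ≤ v' a) :
    RIndep k s v' := by
  refine ⟨hk, fun a ha => le_antisymm ?_ (le_inf (hk a ha) le_sup_left)⟩
  calc v' a ⊓ (k ⊔ (s.erase a).sup v') ≤ v a ⊓ (k ⊔ (s.erase a).sup v) := by
        refine inf_le_inf (hle a ha) (sup_le_sup_left (Finset.sup_le fun b hb =>
          le_trans (hle b (Finset.mem_of_mem_erase hb)) (Finset.le_sup hb)) k)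
    _ = k := h.2 a ha

end LatticeDim

section LatticeDim2
variable {L : Type*} [Lattice L] [BoundedOrder L] [IsModularLattice L]
variable {ι κ : Type*} [DecidableEq ι] [DecidableEq κ]

theorem rindep_subset {k : L} {s t : Finset κ} {v : κ → L}
    (h : RIndep k s v) (hts : t ⊆ s) : RIndep k t v := by
  refine ⟨fun a ha => h.1 a (hts ha), fun a ha =>
    le_antisymm ?_ (le_inf (h.1 a (hts ha)) le_sup_left)⟩
  calc v a ⊓ (k ⊔ (t.erase a).sup v) ≤ v a ⊓ (k ⊔ (s.erase a).sup v) :=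
        inf_le_inf_left _ (sup_le_sup_left (Finset.sup_mono (Finset.erase_subset_erase _ hts)) k)
    _ = k := h.2 a (hts ha)

theorem rindep_sup {k K : L} (hkK : k ≤ K) {s : Finset κ} {v : κ → L}
    (hiv : RIndep k s v) (hK : K ⊓ (k ⊔ s.sup v) = k) :
    RIndep K s (fun a => v a ⊔ K) := by
  constructor
  · exact fun a _ => le_sup_right
  · intro a ha
    have hkv : k ≤ v a := hiv.1 a ha
    have step0 : K ⊔ (s.erase a).sup (fun a' => v a' ⊔ K) = K ⊔ (s.erase a).sup v := supK K _ v
    set X := k ⊔ (s.erase a).sup v with hX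
    have hXK : K ⊔ (s.erase a).sup v = X ⊔ K := by
      rw [hX, sup_comm _ K, ← sup_assoc, sup_eq_left.2 hkK]
    have e2 : K ⊓ (X ⊔ v a) ≤ k := by
      calc K ⊓ (X ⊔ v a) ≤ K ⊓ (k ⊔ s.sup v) := by
            refine inf_le_inf_left _ (sup_le (sup_le le_sup_left ?_) ?_)
            · exact le_sup_of_le_right (Finset.sup_mono (Finset.erase_subset _ _))
            · exact le_sup_of_le_right (Finset.le_sup ha)
        _ = k := hK
    have e3 : (v a ⊔ K) ⊓ X ≤ k := by
      have e1 : (v a ⊔ K) ⊓ (v a ⊔ X) = v a ⊔ (K ⊓ (v a ⊔ X)) :=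
        sup_inf_assoc_of_le K (le_sup_left : v a ≤ v a ⊔ X)
      have e4 : (v a ⊔ K) ⊓ X ≤ v a := by
        calc (v a ⊔ K) ⊓ X ≤ (v a ⊔ K) ⊓ (v a ⊔ X) := inf_le_inf_left _ le_sup_right
          _ = v a ⊔ (K ⊓ (v a ⊔ X)) := e1
          _ ≤ v a ⊔ k := by
              refine sup_le_sup_left (le_trans (inf_le_inf_left _ (sup_comm (v a) X ▸ le_rfl)) e2) _
          _ = v a := sup_eq_left.2 hkv
      calc (v a ⊔ K) ⊓ X ≤ v a ⊓ X := le_inf e4 inf_le_right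
        _ ≤ v a ⊓ (k ⊔ (s.erase a).sup v) := inf_le_inf_left _ le_rfl
        _ = k := hiv.2 a ha
    show (v a ⊔ K) ⊓ (K ⊔ (s.erase a).sup fun a' => v a' ⊔ K) = K
    rw [step0, hXK]
    calc (v a ⊔ K) ⊓ (X ⊔ K) = (K ⊔ X) ⊓ (v a ⊔ K) := by rw [inf_comm, sup_comm X K]
      _ = K ⊔ (X ⊓ (v a ⊔ K)) := sup_inf_assoc_of_le X (le_sup_right : K ≤ v a ⊔ K)
      _ = K := sup_eq_left.2 (le_trans (inf_comm X (v a ⊔ K) ▸ e3) hkK)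

end LatticeDim2

section LatticeDim3
variable {L : Type*} [Lattice L] [BoundedOrder L] [IsModularLattice L]
variable {ι κ : Type*} [DecidableEq ι] [DecidableEq κ]

theorem runif_sup {k K x : L} (hkK : k ≤ K) (hx : RUnif k x) (hxK : x ⊓ K = k) :
    RUnif K (x ⊔ K) := by
  refine ⟨le_sup_right, ?_, ?_⟩
  · intro h
    exact hx.2.1 (by rw [← hxK, inf_eq_left.2 (le_of_sup_eq h)])
  · intro y z hKy hyx hyne hKz hzx hzne
    have hrep : ∀ w : L, K ≤ w → w ≤ x ⊔ K → w = K ⊔ (x ⊓ w) := by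
      intro w hKw hwx
      have h1 : (K ⊔ x) ⊓ w = K ⊔ (x ⊓ w) := sup_inf_assoc_of_le x hKw
      rw [← h1, inf_eq_right.2 (by rwa [sup_comm K x])]
    have hb : ∀ w : L, K ≤ w → w ≤ x ⊔ K → w ≠ K → (k ≤ x ⊓ w ∧ x ⊓ w ≤ x ∧ x ⊓ w ≠ k) := by
      intro w hKw hwx hwne
      refine ⟨le_inf hx.1 (le_trans hkK hKw), inf_le_left, fun h => hwne ?_⟩
      rw [hrep w hKw hwx, h, sup_eq_left.2 hkK]
    obtain ⟨hy1, hy2, hy3⟩ := hb y hKy hyx hyne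
    obtain ⟨hz1, hz2, hz3⟩ := hb z hKz hzx hzne
    have hcore := hx.2.2 (x ⊓ y) (x ⊓ z) hy1 hy2 hy3 hz1 hz2 hz3
    intro h
    apply hcore
    calc (x ⊓ y) ⊓ (x ⊓ z) = x ⊓ (y ⊓ z) := by
          rw [inf_assoc, ← inf_assoc y x z, inf_comm y x, inf_assoc x y z, ← inf_assoc x x _, inf_idem]
      _ = x ⊓ K := by rw [h]
      _ = k := hxK

theorem G2L (t : Finset ι) :
    ∀ (k : L) (u : ι → L) (sv : Finset κ) (v : κ → L),
    (∀ b ∈ t, RUnif k (u b)) → RIndep k t u → k ⊔ t.sup u = ⊤ →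
    RIndep k sv v → (∀ a ∈ sv, v a ≠ k) → sv.card ≤ t.card := by
  induction t using Finset.strongInduction with
  | _ t iht =>
    intro k u sv v hu hiu htop hiv hv
    rcases Finset.eq_empty_or_nonempty t with rfl | ⟨b₀, hb₀⟩
    · rw [Finset.sup_empty, sup_bot_eq] at htop
      have hsv : sv = ∅ := by
        refine Finset.eq_empty_of_forall_notMem fun a ha => hv a ha ?_
        exact le_antisymm (htop ▸ le_top) (hiv.1 a ha)
      simp [hsv]
    -- main case
    set K := u b₀ with hK
    have hKu : RUnif k K := hu b₀ hb₀
    have hkK : k ≤ K := hKu.1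
    -- the new base data on t.erase b₀
    have habs : ∀ b ∈ t.erase b₀, u b ⊓ K = k := by
      intro b hb
      refine le_antisymm ?_ (le_inf (hu b (Finset.mem_of_mem_erase hb)).1 hkK)
      calc u b ⊓ K ≤ u b ⊓ (k ⊔ (t.erase b).sup u) := by
            refine inf_le_inf_left _ (le_sup_of_le_right (Finset.le_sup ?_))
            exact Finset.mem_erase.2 ⟨fun h => (Finset.mem_erase.1 hb).1 h.symm, hb₀⟩
        _ = k := hiu.2 b (Finset.mem_of_mem_erase hb)
    have hu' : ∀ b ∈ t.erase b₀, RUnif K (u b ⊔ K) := fun b hb =>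
      runif_sup hkK (hu b (Finset.mem_of_mem_erase hb)) (habs b hb)
    have hiuK : K ⊓ (k ⊔ (t.erase b₀).sup u) = k := hiu.2 b₀ hb₀
    have hiu' : RIndep K (t.erase b₀) (fun b => u b ⊔ K) :=
      rindep_sup hkK (rindep_subset hiu (Finset.erase_subset _ _)) hiuK
    have htop' : K ⊔ (t.erase b₀).sup (fun b => u b ⊔ K) = ⊤ := by
      rw [supK]
      refine le_antisymm le_top ?_
      rw [← htop]
      refine sup_le (le_trans hkK le_sup_left) (Finset.sup_le fun b hb => ?_)
      by_cases h : b = b₀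
      · subst h; exact le_sup_left
      · exact le_sup_of_le_right (Finset.le_sup (Finset.mem_erase.2 ⟨h, hb⟩))
    -- case A as a reusable fact
    have hcA : ∀ (v : κ → L), RIndep k sv v → (∀ a ∈ sv, v a ≠ k) →
        ∀ a₀ ∈ sv, v a₀ ⊓ K ≠ k → sv.card ≤ t.card := by
      intro v hiv hv a₀ ha₀ hvK
      classical
      set v' := Function.update v a₀ (v a₀ ⊓ K) with hv'
      have hv'le : ∀ a ∈ sv, v' a ≤ v a := by
        intro a _; by_cases h : a = a₀
        · subst h; rw [hv', Function.update_self]; exact inf_le_left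
        · rw [hv', Function.update_of_ne h]
      have hv'k : ∀ a ∈ sv, k ≤ v' a := by
        intro a ha; by_cases h : a = a₀
        · subst h; rw [hv', Function.update_self]; exact le_inf (hiv.1 a ha) hkK
        · rw [hv', Function.update_of_ne h]; exact hiv.1 a ha
      have hiv' : RIndep k sv v' := rindep_mono hiv hv'le hv'k
      have hv'a₀ : v' a₀ = v a₀ ⊓ K := by rw [hv', Function.update_self]
      have hv'a₀K : v' a₀ ≤ K := hv'a₀ ▸ inf_le_right
      have hi : ∀ a ∈ sv, a ≠ a₀ → v' a ⊓ K = k := by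
        intro a ha hne
        by_contra hcon
        have hva : v' a = v a := by rw [hv', Function.update_of_ne hne]
        have := hKu.2.2 (v' a ⊓ K) (v' a₀) (le_inf (hv'k a ha) hkK) inf_le_right hcon
          (hv'k a₀ ha₀) hv'a₀K (hv'a₀ ▸ hvK)
        apply this
        refine le_antisymm ?_ (le_inf (le_inf (hv'k a ha) hkK) (hv'k a₀ ha₀))
        calc (v' a ⊓ K) ⊓ v' a₀ ≤ v a ⊓ (k ⊔ (sv.erase a).sup v) := by
              refine le_inf (le_trans inf_le_left (hva ▸ inf_le_left)) ?_
              refine le_trans inf_le_right (le_trans (hv'le a₀ ha₀) ?_)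
              exact le_sup_of_le_right (Finset.le_sup (Finset.mem_erase.2 ⟨hne.symm, ha₀⟩))
          _ = k := hiv.2 a ha
      have hii : K ⊓ (k ⊔ (sv.erase a₀).sup v') = k := by
        by_contra hcon
        have := hKu.2.2 (K ⊓ (k ⊔ (sv.erase a₀).sup v')) (v' a₀)
          (le_inf hkK le_sup_left) inf_le_left hcon (hv'k a₀ ha₀) hv'a₀K (hv'a₀ ▸ hvK)
        apply this
        refine le_antisymm ?_ (le_inf (le_inf hkK le_sup_left) (hv'k a₀ ha₀))
        calc (K ⊓ (k ⊔ (sv.erase a₀).sup v')) ⊓ v' a₀ ≤ v a₀ ⊓ (k ⊔ (sv.erase a₀).sup v) := by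
              refine le_inf (le_trans inf_le_right (le_trans (hv'le a₀ ha₀) le_rfl)) ?_
              refine le_trans inf_le_left (le_trans inf_le_right (sup_le_sup_left ?_ k))
              exact Finset.sup_le fun b hb => le_trans (hv'le b (Finset.mem_of_mem_erase hb))
                (Finset.le_sup hb)
          _ = k := hiv.2 a₀ ha₀
      -- new family on sv.erase a₀ over base K
      have hiv'' : RIndep K (sv.erase a₀) (fun a => v' a ⊔ K) :=
        rindep_sup hkK (rindep_subset hiv' (Finset.erase_subset _ _)) hii
      have hv'' : ∀ a ∈ sv.erase a₀, (fun a => v' a ⊔ K) a ≠ K := by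
        intro a ha hcon
        obtain ⟨hne, hav⟩ := Finset.mem_erase.1 ha
        have hle : v' a ≤ K := le_of_sup_eq hcon
        have : v' a ⊓ K = v' a := inf_eq_left.2 hle
        rw [hi a hav hne] at this
        exact hv a hav (by rw [hv', Function.update_of_ne hne] at this; exact this.symm ▸ rfl)
      have hcard := iht (t.erase b₀) (Finset.erase_ssubset hb₀) K (fun b => u b ⊔ K)
        (sv.erase a₀) (fun a => v' a ⊔ K) hu' hiu' htop' hiv'' hv''
      have h1 : 1 ≤ sv.card := Finset.card_pos.2 ⟨a₀, ha₀⟩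
      have h2 : 1 ≤ t.card := Finset.card_pos.2 ⟨b₀, hb₀⟩
      rw [Finset.card_erase_of_mem ha₀, Finset.card_erase_of_mem hb₀] at hcard
      omega
    by_cases hA : ∃ a₀ ∈ sv, v a₀ ⊓ K ≠ k
    · obtain ⟨a₀, ha₀, hvK⟩ := hA
      exact hcA v hiv hv a₀ ha₀ hvK
    push_neg at hA
    by_cases hB1 : K ⊓ (k ⊔ sv.sup v) = k
    · -- whole family moves up
      have hiv'' : RIndep K sv (fun a => v a ⊔ K) := rindep_sup hkK hiv hB1
      have hv'' : ∀ a ∈ sv, (fun a => v a ⊔ K) a ≠ K := by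
        intro a ha hcon
        have hle : v a ≤ K := le_of_sup_eq hcon
        exact hv a ha (by rw [← hA a ha, inf_eq_left.2 hle])
      have hcard := iht (t.erase b₀) (Finset.erase_ssubset hb₀) K (fun b => u b ⊔ K)
        sv (fun a => v a ⊔ K) hu' hiu' htop' hiv'' hv''
      exact le_trans hcard (Finset.card_le_card (Finset.erase_subset _ _))
    · -- minimal support trick
      classical
      set P : Finset κ → Prop := fun T => K ⊓ (k ⊔ T.sup v) ≠ k with hP
      have hmin : ∀ (T : Finset κ), T ⊆ sv → P T →
          ∃ T', T' ⊆ sv ∧ P T' ∧ ∀ a ∈ T', ¬ P (T'.erase a) := by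
        intro T
        induction T using Finset.strongInduction with
        | _ T ih =>
          intro hTs hPT
          by_cases hall : ∀ a ∈ T, ¬ P (T.erase a)
          · exact ⟨T, hTs, hPT, hall⟩
          · push_neg at hall
            obtain ⟨a, ha, hPa⟩ := hall
            exact ih (T.erase a) (Finset.erase_ssubset ha)
              (le_trans (Finset.erase_subset _ _) hTs) hPa
      obtain ⟨T, hTs, hPT, hTmin⟩ := hmin sv le_rfl hB1
      have hTne : T.Nonempty := by
        rcases Finset.eq_empty_or_nonempty T with rfl | h
        · exfalso; apply hPT; rw [Finset.sup_empty, sup_bot_eq, inf_eq_right.2 hkK]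
        · exact h
      obtain ⟨a₁, ha₁⟩ := hTne
      set kst := K ⊓ (k ⊔ T.sup v) with hkst
      have hkstk : k ≤ kst := le_inf hkK le_sup_left
      have hkstK : kst ≤ K := inf_le_left
      have hinter : T ∩ sv.erase a₁ = T.erase a₁ := by
        ext x
        simp only [Finset.mem_inter, Finset.mem_erase]
        exact ⟨fun ⟨h1, h2, _⟩ => ⟨h2, h1⟩, fun ⟨h1, h2⟩ => ⟨h2, h1, hTs h2⟩⟩
      have hone : kst ⊓ (k ⊔ (sv.erase a₁).sup v) = k := by
        refine le_antisymm ?_ (le_inf hkstk le_sup_left)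
        have h1 : kst ⊓ (k ⊔ (sv.erase a₁).sup v) ≤ k ⊔ (T.erase a₁).sup v := by
          calc kst ⊓ (k ⊔ (sv.erase a₁).sup v)
              ≤ (k ⊔ T.sup v) ⊓ (k ⊔ (sv.erase a₁).sup v) := inf_le_inf (inf_le_right) le_rfl
            _ = k ⊔ (T ∩ sv.erase a₁).sup v := relSJ hiv T (sv.erase a₁) hTs (Finset.erase_subset _ _)
            _ = k ⊔ (T.erase a₁).sup v := by rw [hinter]
        have h2 : kst ⊓ (k ⊔ (sv.erase a₁).sup v) ≤ K := le_trans inf_le_left hkstK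
        have h3 := hTmin a₁ ha₁
        rw [hP] at h3
        push_neg at h3
        calc kst ⊓ (k ⊔ (sv.erase a₁).sup v) ≤ K ⊓ (k ⊔ (T.erase a₁).sup v) := le_inf h2 h1
          _ = k := h3
      set w := Function.update v a₁ kst with hw
      have hwerase : ∀ (s' : Finset κ), a₁ ∉ s' → s'.sup w = s'.sup v := by
        intro s' ha
        refine Finset.sup_congr rfl fun b hb => ?_
        rw [hw, Function.update_of_ne (by rintro rfl; exact ha hb)]
      have hiw : RIndep k sv w := by
        constructor
        · intro a ha; by_cases h : a = a₁
          · subst h; rw [hw, Function.update_self]; exact hkstk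
          · rw [hw, Function.update_of_ne h]; exact hiv.1 a ha
        · intro a ha
          by_cases h : a = a₁
          · subst h
            rw [hw, Function.update_self, hwerase _ (Finset.notMem_erase _ _)]
            exact hone
          · rw [hw, Function.update_of_ne h]
            refine le_antisymm ?_ (le_inf (hiv.1 a ha) le_sup_left)
            set X := k ⊔ ((sv.erase a).erase a₁).sup v with hX
            have hsb : (sv.erase a).sup w ≤ kst ⊔ ((sv.erase a).erase a₁).sup v := by
              refine Finset.sup_le fun b hb => ?_
              by_cases hb1 : b = a₁
              · subst hb1; rw [hw, Function.update_self]; exact le_sup_left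
              · rw [hw, Function.update_of_ne hb1]
                exact le_sup_of_le_right (Finset.le_sup (Finset.mem_erase.2 ⟨hb1, hb⟩))
            have step1 : v a ⊓ (k ⊔ (sv.erase a).sup w) ≤ v a ⊓ (kst ⊔ X) := by
              refine inf_le_inf_left _ (sup_le ?_ ?_)
              · exact le_trans hkstk le_sup_left
              · exact le_trans hsb (sup_le le_sup_left (le_sup_of_le_right le_sup_right))
            have hmod : (kst ⊔ X) ⊓ (v a ⊔ X) = X ⊔ (kst ⊓ (v a ⊔ X)) := by
              rw [sup_comm kst X]
              exact sup_inf_assoc_of_le kst (le_sup_right : X ≤ v a ⊔ X)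
            have hkva : kst ⊓ (v a ⊔ X) ≤ k := by
              calc kst ⊓ (v a ⊔ X) ≤ kst ⊓ (k ⊔ (sv.erase a₁).sup v) := by
                    refine inf_le_inf_left _ (sup_le ?_ ?_)
                    · exact le_sup_of_le_right (Finset.le_sup (Finset.mem_erase.2 ⟨h, ha⟩))
                    · rw [hX]
                      refine sup_le le_sup_left (le_sup_of_le_right (Finset.sup_mono ?_))
                      intro x hx
                      obtain ⟨hx1, hx2⟩ := Finset.mem_erase.1 hx
                      exact Finset.mem_erase.2 ⟨hx1, Finset.mem_of_mem_erase hx2⟩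
                _ = k := hone
            have step2 : v a ⊓ (kst ⊔ X) ≤ X := by
              calc v a ⊓ (kst ⊔ X) ≤ (v a ⊔ X) ⊓ (kst ⊔ X) := inf_le_inf le_sup_left le_rfl
                _ = (kst ⊔ X) ⊓ (v a ⊔ X) := inf_comm _ _
                _ = X ⊔ (kst ⊓ (v a ⊔ X)) := hmod
                _ ≤ X ⊔ k := sup_le_sup_left hkva _
                _ = X := sup_eq_left.2 le_sup_left
            calc v a ⊓ (k ⊔ (sv.erase a).sup w) ≤ (v a ⊓ (kst ⊔ X)) ⊓ v a :=
                  le_inf step1 inf_le_left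
              _ ≤ X ⊓ v a := inf_le_inf step2 le_rfl
              _ = v a ⊓ X := inf_comm _ _
              _ ≤ v a ⊓ (k ⊔ (sv.erase a).sup v) := by
                  refine inf_le_inf_left _ (sup_le le_sup_left (le_sup_of_le_right
                    (Finset.sup_mono (Finset.erase_subset _ _))))
              _ = k := hiv.2 a ha
      have hwv : ∀ a ∈ sv, w a ≠ k := by
        intro a ha
        by_cases h : a = a₁
        · subst h; rw [hw, Function.update_self]; exact hPT
        · rw [hw, Function.update_of_ne h]; exact hv a ha
      have hwa₁K : w a₁ ⊓ K ≠ k := by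
        rw [hw, Function.update_self, inf_eq_left.2 hkstK]
        exact hPT
      exact hcA w hiw hwv a₁ (hTs ha₁) hwa₁K

end LatticeDim3


section ModuleLemmas
variable {R : Type*} [Ring R]

theorem inf_ne_bot_finset {M : Type*} [AddCommGroup M] [Module R M]
    (hM : IsUniformModule R M) {ι : Type*} (s : Finset ι) (p : ι → Submodule R M)
    (hp : ∀ i ∈ s, p i ≠ ⊥) : s.inf p ≠ ⊥ := by
  classical
  induction s using Finset.induction with
  | empty =>
    obtain ⟨x, hx⟩ := hM.1
    rw [Finset.inf_empty]
    exact fun h => hx (by simpa using (Submodule.eq_bot_iff _).1 h x trivial)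
  | insert a s' hni ih =>
    rw [Finset.inf_insert]
    exact hM.2 _ _ (hp a (Finset.mem_insert_self a s'))
      (ih fun i hi => hp i (Finset.mem_insert_of_mem hi))

theorem sup_ne_top_finset {M : Type*} [AddCommGroup M] [Module R M]
    (hM : IsCouniformModule R M) {ι : Type*} (s : Finset ι) (p : ι → Submodule R M)
    (hp : ∀ i ∈ s, p i ≠ ⊤) : s.sup p ≠ ⊤ := by
  classical
  induction s using Finset.induction with
  | empty =>
    obtain ⟨x, hx⟩ := hM.1
    rw [Finset.sup_empty]
    intro h
    exact hx (by simpa using (h.symm ▸ Submodule.mem_top : x ∈ (⊥ : Submodule R M)))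
  | insert a s' hni ih =>
    rw [Finset.sup_insert]
    exact hM.2 _ _ (hp a (Finset.mem_insert_self a s'))
      (ih fun i hi => hp i (Finset.mem_insert_of_mem hi))

/-- Essential-scalar lemma. -/
theorem exists_smul_mem {ι : Type*} (A : ι → Type*) [∀ i, AddCommGroup (A i)]
    [∀ i, Module R (A i)] (hA : ∀ i, IsUniformModule R (A i))
    (K : ∀ i, Submodule R (A i)) (hK : ∀ i, K i ≠ ⊥) (s : Finset ι) :
    ∀ (x : ∀ i, A i), ∃ r : R, (∀ i ∈ s, r • x i ∈ K i) ∧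
      ((∃ i ∈ s, x i ≠ 0) → ∃ i ∈ s, r • x i ≠ 0) := by
  classical
  induction s using Finset.induction with
  | empty => exact fun x => ⟨1, fun i hi => absurd hi (Finset.notMem_empty i), by simp⟩
  | insert a s' hni ih =>
    intro x
    by_cases hxa : x a = 0
    · obtain ⟨r, hr1, hr2⟩ := ih x
      refine ⟨r, fun i hi => ?_, fun hex => ?_⟩
      · rcases Finset.mem_insert.1 hi with rfl | hi
        · rw [hxa, smul_zero]; exact Submodule.zero_mem _
        · exact hr1 i hi
      · obtain ⟨i, hi, hxi⟩ := hex
        rcases Finset.mem_insert.1 hi with rfl | hi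
        · exact absurd hxa hxi
        · obtain ⟨j, hj, hrj⟩ := hr2 ⟨i, hi, hxi⟩
          exact ⟨j, Finset.mem_insert_of_mem hj, hrj⟩
    · have hspan : Submodule.span R {x a} ≠ ⊥ := by
        rw [ne_eq, Submodule.span_singleton_eq_bot]; exact hxa
      have hne := (hA a).2 _ _ hspan (hK a)
      obtain ⟨y, hy, hyne⟩ := (Submodule.ne_bot_iff _).1 hne
      obtain ⟨r₀, hr₀⟩ := Submodule.mem_span_singleton.1 hy.1
      obtain ⟨r₁, hr11, hr12⟩ := ih (r₀ • x)
      by_cases hall : ∀ b ∈ s', r₀ • x b = 0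
      · refine ⟨r₀, fun i hi => ?_, fun _ => ⟨a, Finset.mem_insert_self a s', ?_⟩⟩
        · rcases Finset.mem_insert.1 hi with rfl | hi
          · rw [hr₀]; exact hy.2
          · rw [hall i hi]; exact Submodule.zero_mem _
        · rw [hr₀]; exact hyne
      · push_neg at hall
        refine ⟨r₁ * r₀, fun i hi => ?_, fun _ => ?_⟩
        · rcases Finset.mem_insert.1 hi with rfl | hi
          · rw [mul_smul, hr₀]; exact Submodule.smul_mem _ _ hy.2
          · rw [mul_smul]; exact hr11 i hi
        · obtain ⟨b, hb, hrb⟩ := hr12 (by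
            obtain ⟨b, hb, hxb⟩ := hall; exact ⟨b, hb, by simpa using hxb⟩)
          exact ⟨b, Finset.mem_insert_of_mem hb, by rw [mul_smul]; simpa using hrb⟩

end ModuleLemmas

section MatrixLemmas
variable {R : Type*} [Ring R] {ι : Type*} [Fintype ι] [DecidableEq ι]
variable (A : ι → Type*) [∀ i, AddCommGroup (A i)] [∀ i, Module R (A i)]

theorem matrix_injective (hA : ∀ i, IsUniformModule R (A i))
    (W : ((i : ι) → A i) →ₗ[R] ((i : ι) → A i))
    (hdiag : ∀ b, ¬ Function.Injective fun x : A b => W (Pi.single b x) b - x)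
    (hoff : ∀ a b, a ≠ b → ¬ Function.Injective fun x : A b => W (Pi.single b x) a) :
    Function.Injective W := by
  set D : ∀ a b, A b →ₗ[R] A a := fun a b =>
    (LinearMap.proj a).comp (W.comp (LinearMap.single R A b)) with hD
  set E : ∀ b, A b →ₗ[R] A b := fun b => D b b - LinearMap.id with hE
  set K : ∀ b, Submodule R (A b) := fun b =>
    ((Finset.univ.erase b).inf fun a => LinearMap.ker (D a b)) ⊓ LinearMap.ker (E b) with hKdef
  have hKne : ∀ b, K b ≠ ⊥ := by
    intro b
    refine (hA b).2 _ _ (inf_ne_bot_finset (hA b) _ _ fun a ha => ?_) ?_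
    · intro hker
      exact hoff a b (Finset.mem_erase.1 ha).1 (LinearMap.ker_eq_bot.1 hker)
    · intro hker
      exact hdiag b (LinearMap.ker_eq_bot.1 hker)
  have hkey : ∀ b (y : A b), y ∈ K b → W (Pi.single b y) = Pi.single b y := by
    intro b y hy
    funext a
    by_cases h : a = b
    · subst h
      have h1 : E a y = 0 := hy.2
      have h2 : W (Pi.single a y) a - y = 0 := h1
      rw [Pi.single_eq_same]
      exact sub_eq_zero.1 h2
    · have h1 : y ∈ LinearMap.ker (D a b) :=
        (Submodule.mem_finsetInf.1 hy.1) a (Finset.mem_erase.2 ⟨h, Finset.mem_univ a⟩)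
      have h2 : W (Pi.single b y) a = 0 := h1
      rw [h2, Pi.single_eq_of_ne h]
  have hker : ∀ x, W x = 0 → x = 0 := by
    intro x hx
    by_contra hxne
    obtain ⟨r, hr1, hr2⟩ := exists_smul_mem A hA K hKne Finset.univ x
    obtain ⟨b, _, hrb⟩ := hr2 (by
      obtain ⟨b, hb⟩ := Function.ne_iff.1 hxne
      exact ⟨b, Finset.mem_univ b, hb⟩)
    have hrx : r • x ≠ 0 := fun h => hrb (by rw [← Pi.smul_apply, h, Pi.zero_apply])
    have hsum : r • x = ∑ b, Pi.single b (r • x b) := by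
      rw [← Finset.univ_sum_single (r • x)]
      exact Finset.sum_congr rfl fun b _ => by rw [Pi.smul_apply]
    have : W (r • x) = r • x := by
      rw [hsum, map_sum]
      exact Finset.sum_congr rfl fun b _ => hkey b _ (hr1 b (Finset.mem_univ b))
    rw [map_smul, hx, smul_zero] at this
    exact hrx this.symm
  intro x y hxy
  have := hker (x - y) (by rw [map_sub, hxy, sub_self])
  exact sub_eq_zero.1 this

end MatrixLemmas

section Smallness
variable {R : Type*} [Ring R]

/-- a submodule C is small (superfluous). -/
def IsSmall {M : Type*} [AddCommGroup M] [Module R M] (C : Submodule R M) : Prop :=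
  ∀ N : Submodule R M, N ⊔ C = ⊤ → N = ⊤

theorem isSmall_bot {M : Type*} [AddCommGroup M] [Module R M] :
    IsSmall (⊥ : Submodule R M) := fun N hN => by rwa [sup_bot_eq] at hN

theorem isSmall_of_le {M : Type*} [AddCommGroup M] [Module R M] {C C' : Submodule R M}
    (h : IsSmall C) (hle : C' ≤ C) : IsSmall C' := by
  intro N hN
  apply h
  rw [eq_top_iff, ← hN]
  exact sup_le_sup_left hle N

theorem isSmall_sup {M : Type*} [AddCommGroup M] [Module R M] {C C' : Submodule R M}
    (h : IsSmall C) (h' : IsSmall C') : IsSmall (C ⊔ C') := by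
  intro N hN
  have h1 : (N ⊔ C) ⊔ C' = ⊤ := by rw [sup_assoc]; exact hN
  exact h N (h' (N ⊔ C) h1 ▸ (h' (N ⊔ C) h1))

theorem isSmall_map_single {M A : Type*} [AddCommGroup M] [Module R M]
    [AddCommGroup A] [Module R A] (j : A →ₗ[R] M) (hj : Function.Injective j)
    (hA : IsCouniformModule R A) {C : Submodule R A} (hC : C ≠ ⊤) :
    IsSmall (Submodule.map j C) := by
  intro N hN
  set axis := LinearMap.range j with haxis
  set p := Submodule.map j C with hp
  have hpax : p ≤ axis := by
    rw [hp, haxis, ← Submodule.map_top]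
    exact Submodule.map_mono le_top
  have hmod : (p ⊔ N) ⊓ axis = p ⊔ (N ⊓ axis) := sup_inf_assoc_of_le N hpax
  have haxeq : axis = (N ⊓ axis) ⊔ p := by
    calc axis = (p ⊔ N) ⊓ axis := by rw [sup_comm p N, hN, top_inf_eq]
      _ = p ⊔ (N ⊓ axis) := hmod
      _ = (N ⊓ axis) ⊔ p := sup_comm _ _
  set X := Submodule.comap j (N ⊓ axis) with hX
  have hmapX : Submodule.map j X = N ⊓ axis := by
    rw [hX, Submodule.map_comap_eq, ← haxis]
    exact inf_eq_right.2 inf_le_right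
  have hXC : Submodule.map j (X ⊔ C) = Submodule.map j ⊤ := by
    rw [Submodule.map_sup, hmapX, Submodule.map_top, ← haxis, ← hp, ← haxeq]
  have hXCtop : X ⊔ C = ⊤ := Submodule.map_injective_of_injective hj hXC
  have hXtop : X = ⊤ := by
    by_contra hX'
    exact hA.2 X C hX' hC hXCtop
  have haxN : axis ≤ N := by
    have h2 : N ⊓ axis = axis := by rw [← hmapX, hXtop, Submodule.map_top, haxis]
    exact h2 ▸ inf_le_left
  calc N = N ⊔ p := (sup_eq_left.2 (hpax.trans haxN)).symm
    _ = ⊤ := hN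

end Smallness


theorem smem {R M : Type*} [Ring R] [AddCommGroup M] [Module R M] {p q : Submodule R M}
    (h : p ≤ q) {x : M} (hx : x ∈ p) : x ∈ q := h hx

section MatrixSurj
variable {R : Type*} [Ring R] {ι : Type*} [Fintype ι] [DecidableEq ι]
variable (A : ι → Type*) [∀ i, AddCommGroup (A i)] [∀ i, Module R (A i)]

theorem matrix_surjective (hA : ∀ i, IsCouniformModule R (A i))
    (W : ((i : ι) → A i) →ₗ[R] ((i : ι) → A i))
    (hdiag : ∀ b, ¬ Function.Surjective fun x : A b => W (Pi.single b x) b - x)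
    (hoff : ∀ a b, a ≠ b → ¬ Function.Surjective fun x : A b => W (Pi.single b x) a) :
    Function.Surjective W := by
  set D : ∀ a b, A b →ₗ[R] A a := fun a b =>
    (LinearMap.proj a).comp (W.comp (LinearMap.single R A b)) with hD
  set E : ∀ b, A b →ₗ[R] A b := fun b => D b b - LinearMap.id with hE
  set C : ∀ a, Submodule R (A a) := fun a =>
    ((Finset.univ.erase a).sup fun b => LinearMap.range (D a b)) ⊔ LinearMap.range (E a) with hCdef
  have hCne : ∀ a, C a ≠ ⊤ := by
    intro a
    have h1 : ((Finset.univ.erase a).sup fun b => LinearMap.range (D a b)) ≠ ⊤ :=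
      sup_ne_top_finset (hA a) _ _ fun b hb => fun htop =>
        hoff a b (Finset.mem_erase.1 hb).1.symm (LinearMap.range_eq_top.1 htop)
    have h2 : LinearMap.range (E a) ≠ ⊤ := fun htop =>
      hdiag a (LinearMap.range_eq_top.1 htop)
    exact (hA a).2 _ _ h1 h2
  have hsingle_inj : ∀ a, Function.Injective (LinearMap.single R A a) := by
    intro a x y hxy
    have := congrFun hxy a
    simpa using this
  set Cbig : Submodule R ((i : ι) → A i) :=
    Finset.univ.sup (fun a => Submodule.map (LinearMap.single R A a) (C a)) with hCbig
  have hCsmall : IsSmall Cbig := by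
    rw [hCbig]
    induction (Finset.univ : Finset ι) using Finset.induction with
    | empty => rw [Finset.sup_empty]; exact isSmall_bot
    | insert a s' hni ih =>
      rw [Finset.sup_insert]
      exact isSmall_sup (isSmall_map_single _ (hsingle_inj a) (hA a) (hCne a)) ih
  have hWx : ∀ x, W x - x ∈ Cbig := by
    intro x
    have hsum : W x - x = ∑ a, Pi.single a ((W x - x) a) := (Finset.univ_sum_single _).symm
    rw [hsum]
    refine Submodule.sum_mem _ fun a _ => ?_
    have hmem : (W x - x) a ∈ C a := by
      have hx : x = ∑ b, Pi.single b (x b) := (Finset.univ_sum_single x).symm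
      have hWxa : (W x) a = ∑ b, D a b (x b) := by
        conv_lhs => rw [hx]
        rw [map_sum]
        simp only [Finset.sum_apply]
        rfl
      have hsplit : (W x - x) a = (∑ b ∈ Finset.univ.erase a, D a b (x b)) + E a (x a) := by
        rw [Pi.sub_apply, hWxa, ← Finset.sum_erase_add _ _ (Finset.mem_univ a)]
        have : E a (x a) = D a a (x a) - x a := rfl
        rw [this]
        abel
      rw [hsplit]
      refine Submodule.add_mem _ ?_ ?_
      · refine Submodule.sum_mem _ fun b hb => ?_
        exact smem ((Finset.le_sup (f := fun b => LinearMap.range (D a b)) hb).trans le_sup_left)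
          (LinearMap.mem_range_self _ _)
      · exact smem le_sup_right (LinearMap.mem_range_self _ _)
    exact smem (Finset.le_sup (Finset.mem_univ a)) (Submodule.mem_map_of_mem hmem)
  have hrange : LinearMap.range W ⊔ Cbig = ⊤ := by
    rw [eq_top_iff]
    intro y _
    have : y = W y + -(W y - y) := by abel
    rw [this]
    exact Submodule.add_mem _ (smem le_sup_left (LinearMap.mem_range_self _ _))
      (smem le_sup_right (Submodule.neg_mem _ (hWx y)))
  rw [← LinearMap.range_eq_top]
  exact hCsmall _ hrange

end MatrixSurj

-- ===== axes lemmas =====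
section Axes
variable {R : Type*} [Ring R] {ι : Type*} [Fintype ι] [DecidableEq ι]
variable (B : ι → Type*) [∀ b, AddCommGroup (B b)] [∀ b, Module R (B b)]

theorem pi_single_ne_zero {b : ι} {x : B b} (hx : x ≠ 0) : Pi.single b x ≠ 0 := by
  intro h
  exact hx (by simpa using congrFun h b)

theorem axis_erase_le_ker (b : ι) :
    ((Finset.univ.erase b).sup fun b' => LinearMap.range (LinearMap.single R B b'))
      ≤ LinearMap.ker (LinearMap.proj (R := R) (φ := B) b) := by
  refine Finset.sup_le fun b' hb' => ?_
  rintro x ⟨y, rfl⟩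
  exact LinearMap.mem_ker.2 (Pi.single_eq_of_ne (Ne.symm (Finset.mem_erase.1 hb').1) y)

theorem axis_inf_ker (b : ι) :
    LinearMap.range (LinearMap.single R B b) ⊓
      LinearMap.ker (LinearMap.proj (R := R) (φ := B) b) = ⊥ := by
  rw [eq_bot_iff]
  rintro x ⟨⟨y, rfl⟩, hker⟩
  have hy : y = 0 := by simpa using hker
  simp [hy]

theorem axis_rindep :
    RIndep (⊥ : Submodule R ((b : ι) → B b)) Finset.univ
      (fun b => LinearMap.range (LinearMap.single R B b)) := by
  refine ⟨fun _ _ => bot_le, fun b _ => ?_⟩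
  rw [bot_sup_eq, ← le_bot_iff]
  calc LinearMap.range (LinearMap.single R B b) ⊓
      ((Finset.univ.erase b).sup fun b' => LinearMap.range (LinearMap.single R B b'))
      ≤ LinearMap.range (LinearMap.single R B b) ⊓
        LinearMap.ker (LinearMap.proj (R := R) (φ := B) b) :=
        inf_le_inf_left _ (axis_erase_le_ker B b)
    _ = ⊥ := axis_inf_ker B b

theorem axis_sup_top :
    (⊥ : Submodule R ((b : ι) → B b)) ⊔
      (Finset.univ.sup fun b => LinearMap.range (LinearMap.single R B b)) = ⊤ := by
  rw [bot_sup_eq, eq_top_iff]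
  intro x _
  have hx : x = ∑ b, Pi.single b (x b) := (Finset.univ_sum_single x).symm
  rw [hx]
  exact Submodule.sum_mem _ fun b _ =>
    smem (Finset.le_sup (f := fun b => LinearMap.range (LinearMap.single R B b)) (Finset.mem_univ b)) (LinearMap.mem_range.2 ⟨x b, rfl⟩)

theorem axis_runif (hB : ∀ b, IsUniformModule R (B b)) (b : ι) :
    RUnif (⊥ : Submodule R ((b : ι) → B b)) (LinearMap.range (LinearMap.single R B b)) := by
  refine ⟨bot_le, ?_, ?_⟩
  · obtain ⟨x₀, hx₀⟩ := (hB b).1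
    rw [ne_eq, Submodule.eq_bot_iff]
    push_neg
    exact ⟨Pi.single b x₀, ⟨x₀, rfl⟩, pi_single_ne_zero B hx₀⟩
  · intro y z _ hyle hyne _ hzle hzne
    set j := LinearMap.single R B b with hj
    have hjinj : Function.Injective j := by
      intro w w' hww
      have h2 : Pi.single b w b = Pi.single (M := B) b w' b := congrFun hww b
      rwa [Pi.single_eq_same, Pi.single_eq_same] at h2
    have hcomap : ∀ q : Submodule R ((b : ι) → B b), q ≤ LinearMap.range j →
        Submodule.map j (Submodule.comap j q) = q := by
      intro q hq
      rw [Submodule.map_comap_eq]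
      exact inf_eq_right.2 hq
    have hyne' : Submodule.comap j y ≠ ⊥ := by
      intro hbot
      exact hyne (by rw [← hcomap y hyle, hbot, Submodule.map_bot])
    have hzne' : Submodule.comap j z ≠ ⊥ := by
      intro hbot
      exact hzne (by rw [← hcomap z hzle, hbot, Submodule.map_bot])
    have h := (hB b).2 _ _ hyne' hzne'
    obtain ⟨w, hw, hwne⟩ := (Submodule.ne_bot_iff _).1 h
    rw [ne_eq, Submodule.eq_bot_iff]
    push_neg
    refine ⟨j w, ⟨?_, ?_⟩, fun h0 => hwne (hjinj (by rw [h0, map_zero]))⟩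
    · have := hcomap y hyle ▸ Submodule.mem_map_of_mem hw.1
      exact this
    · have := hcomap z hzle ▸ Submodule.mem_map_of_mem hw.2
      exact this

end Axes

section CardBounds
variable {R : Type*} [Ring R] {ι κ : Type*} [Fintype ι] [Fintype κ] [DecidableEq ι] [DecidableEq κ]

theorem mymap_finset_sup {M N : Type*} [AddCommGroup M] [Module R M] [AddCommGroup N] [Module R N]
    (f : M →ₗ[R] N) (s : Finset κ) (p : κ → Submodule R M) :
    Submodule.map f (s.sup p) = s.sup fun a => Submodule.map f (p a) := by
  induction s using Finset.induction with
  | empty => simp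
  | insert a s' hni ih => rw [Finset.sup_insert, Finset.sup_insert,
      Submodule.map_sup, ih]

theorem card_le_of_injective_pi (A : κ → Type*) (B : ι → Type*)
    [∀ a, AddCommGroup (A a)] [∀ a, Module R (A a)]
    [∀ b, AddCommGroup (B b)] [∀ b, Module R (B b)]
    (hA : ∀ a, ∃ x : A a, x ≠ 0) (hB : ∀ b, IsUniformModule R (B b))
    (f : ((a : κ) → A a) →ₗ[R] ((b : ι) → B b)) (hf : Function.Injective f) :
    Fintype.card κ ≤ Fintype.card ι := by
  set v : κ → Submodule R ((b : ι) → B b) :=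
    fun a => Submodule.map f (LinearMap.range (LinearMap.single R A a)) with hv
  have hvind : RIndep (⊥ : Submodule R ((b : ι) → B b)) Finset.univ v := by
    refine ⟨fun _ _ => bot_le, fun a _ => ?_⟩
    rw [bot_sup_eq, hv]
    have h1 : ((Finset.univ.erase a).sup fun a' =>
        Submodule.map f (LinearMap.range (LinearMap.single R A a'))) =
        Submodule.map f ((Finset.univ.erase a).sup fun a' =>
          LinearMap.range (LinearMap.single R A a')) := (mymap_finset_sup f _ _).symm
    rw [h1, ← Submodule.map_inf f hf]
    have h2 := (axis_rindep (R := R) A).2 a (Finset.mem_univ a)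
    rw [bot_sup_eq] at h2
    rw [h2, Submodule.map_bot]
  have hvne : ∀ a ∈ (Finset.univ : Finset κ), v a ≠ ⊥ := by
    intro a _
    obtain ⟨x₀, hx₀⟩ := hA a
    rw [hv, ne_eq, Submodule.eq_bot_iff]
    push_neg
    refine ⟨f (Pi.single a x₀), Submodule.mem_map_of_mem ⟨x₀, rfl⟩, fun h0 => ?_⟩
    exact pi_single_ne_zero A hx₀ (hf (by rw [h0, map_zero]))
  have := G2L (L := Submodule R ((b : ι) → B b)) Finset.univ ⊥
    (fun b => LinearMap.range (LinearMap.single R B b)) Finset.univ v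
    (fun b _ => axis_runif B hB b) (axis_rindep B) (axis_sup_top B) hvind hvne
  simpa using this

theorem card_le_of_surjective_pi (B : ι → Type*) (A : κ → Type*)
    [∀ b, AddCommGroup (B b)] [∀ b, Module R (B b)]
    [∀ a, AddCommGroup (A a)] [∀ a, Module R (A a)]
    (hB : ∀ b, IsCouniformModule R (B b)) (hA : ∀ a, ∃ x : A a, x ≠ 0)
    (f : ((b : ι) → B b) →ₗ[R] ((a : κ) → A a)) (hf : Function.Surjective f) :
    Fintype.card κ ≤ Fintype.card ι := by
  set L := Submodule R ((b : ι) → B b) with hL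
  set u : ι → Lᵒᵈ := fun b => OrderDual.toDual (LinearMap.ker (LinearMap.proj (R := R) (φ := B) b))
    with hu
  set v : κ → Lᵒᵈ := fun a => OrderDual.toDual (LinearMap.ker ((LinearMap.proj a).comp f)) with hvd
  have hproj_surj : ∀ b, Function.Surjective (LinearMap.proj (R := R) (φ := B) b) :=
    fun b y => ⟨Pi.single b y, Pi.single_eq_same b y⟩
  -- dual-uniformity of coordinate kernels
  have hRU : ∀ b ∈ (Finset.univ : Finset ι), RUnif (⊥ : Lᵒᵈ) (u b) := by
    intro b _
    refine ⟨bot_le, ?_, ?_⟩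
    · intro hc
      obtain ⟨x₀, hx₀⟩ := (hB b).1
      have : LinearMap.ker (LinearMap.proj (R := R) (φ := B) b) = ⊤ := congrArg OrderDual.ofDual hc
      exact hx₀ (by simpa using (Submodule.eq_top_iff'.1 this) (Pi.single b x₀))
    · intro y z _ hyle hyne _ hzle hzne
      set y₀ := OrderDual.ofDual y with hy₀
      set z₀ := OrderDual.ofDual z with hz₀
      have hyle' : LinearMap.ker (LinearMap.proj (R := R) (φ := B) b) ≤ y₀ := hyle
      have hzle' : LinearMap.ker (LinearMap.proj (R := R) (φ := B) b) ≤ z₀ := hzle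
      -- goal : y ⊓ z ≠ ⊥ in dual, i.e. y₀ ⊔ z₀ ≠ ⊤
      intro hc
      have hyt : y₀ ≠ ⊤ := fun h => hyne (congrArg OrderDual.toDual h)
      have hzt : z₀ ≠ ⊤ := fun h => hzne (congrArg OrderDual.toDual h)
      have hysup : y₀ ⊔ z₀ = ⊤ := congrArg OrderDual.ofDual hc
      have hmy : Submodule.map (LinearMap.proj (R := R) (φ := B) b) y₀ ≠ ⊤ := by
        intro hmap
        apply hyt
        have := congrArg (Submodule.comap (LinearMap.proj (R := R) (φ := B) b)) hmap
        rw [Submodule.comap_map_eq, Submodule.comap_top, sup_eq_left.2 hyle'] at this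
        exact this
      have hmz : Submodule.map (LinearMap.proj (R := R) (φ := B) b) z₀ ≠ ⊤ := by
        intro hmap
        apply hzt
        have := congrArg (Submodule.comap (LinearMap.proj (R := R) (φ := B) b)) hmap
        rw [Submodule.comap_map_eq, Submodule.comap_top, sup_eq_left.2 hzle'] at this
        exact this
      apply (hB b).2 _ _ hmy hmz
      rw [← Submodule.map_sup, hysup, Submodule.map_top, LinearMap.range_eq_top.2 (hproj_surj b)]
  have hRI : RIndep (⊥ : Lᵒᵈ) Finset.univ u := by
    refine ⟨fun _ _ => bot_le, fun b _ => ?_⟩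
    show OrderDual.toDual (LinearMap.ker (LinearMap.proj (R := R) (φ := B) b) ⊔
      ((⊤ : L) ⊓ (Finset.univ.erase b).inf fun b' =>
        LinearMap.ker (LinearMap.proj (R := R) (φ := B) b'))) = OrderDual.toDual (⊤ : L)
    apply congrArg
    rw [top_inf_eq, eq_top_iff]
    intro x _
    have hx : x = (x - Pi.single b (x b)) + Pi.single b (x b) := by abel
    rw [hx]
    refine Submodule.add_mem _ (smem le_sup_left ?_) (smem le_sup_right ?_)
    · exact LinearMap.mem_ker.2 (by simp)
    · rw [Submodule.mem_finsetInf]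
      intro b' hb'
      exact LinearMap.mem_ker.2 (Pi.single_eq_of_ne (Finset.mem_erase.1 hb').1 _)
  have hTop : (⊥ : Lᵒᵈ) ⊔ Finset.univ.sup u = ⊤ := by
    show OrderDual.toDual ((⊤ : L) ⊓ Finset.univ.inf fun b =>
      LinearMap.ker (LinearMap.proj (R := R) (φ := B) b)) = OrderDual.toDual (⊥ : L)
    apply congrArg
    rw [top_inf_eq, eq_bot_iff]
    intro x hx
    rw [Submodule.mem_finsetInf] at hx
    have : x = 0 := funext fun b => hx b (Finset.mem_univ b)
    simp [this]
  have hvI : RIndep (⊥ : Lᵒᵈ) Finset.univ v := by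
    refine ⟨fun _ _ => bot_le, fun a _ => ?_⟩
    show OrderDual.toDual (LinearMap.ker ((LinearMap.proj a).comp f) ⊔
      ((⊤ : L) ⊓ (Finset.univ.erase a).inf fun a' =>
        LinearMap.ker ((LinearMap.proj a').comp f))) = OrderDual.toDual (⊤ : L)
    apply congrArg
    rw [top_inf_eq, eq_top_iff]
    intro x _
    obtain ⟨y, hy⟩ := hf (Pi.single a ((f x) a))
    have hx : x = (x - y) + y := by abel
    rw [hx]
    refine Submodule.add_mem _ (smem le_sup_left ?_) (smem le_sup_right ?_)
    · refine LinearMap.mem_ker.2 ?_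
      show (f (x - y)) a = 0
      rw [map_sub, hy]
      simp
    · rw [Submodule.mem_finsetInf]
      intro a' ha'
      refine LinearMap.mem_ker.2 ?_
      show (f y) a' = 0
      rw [hy]
      exact Pi.single_eq_of_ne (Finset.mem_erase.1 ha').1 _
  have hvne : ∀ a ∈ (Finset.univ : Finset κ), v a ≠ (⊥ : Lᵒᵈ) := by
    intro a _ hc
    obtain ⟨x₀, hx₀⟩ := hA a
    have hker : LinearMap.ker ((LinearMap.proj a).comp f) = ⊤ := congrArg OrderDual.ofDual hc
    obtain ⟨y, hy⟩ := hf (Pi.single a x₀)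
    have : (f y) a = 0 := (Submodule.eq_top_iff'.1 hker) y
    rw [hy, Pi.single_eq_same] at this
    exact hx₀ this
  have := G2L (L := Lᵒᵈ) Finset.univ ⊥ u Finset.univ v hRU hRI hTop hvI hvne
  simpa using this

end CardBounds

-- ===== Slender tail lemma =====
section Slender
variable {R : Type*} [Ring R]


theorem slender_tail {M : Type*} [AddCommGroup M] [Module R M]
    (hM : IsSlender R M) {I : Type*} [Countable I] (A : I → Type*)
    [∀ i, AddCommGroup (A i)] [∀ i, Module R (A i)] (f : ((i : I) → A i) →ₗ[R] M) :
    ∃ F : Finset I, ∀ x, (∀ i ∈ F, x i = 0) → f x = 0 := by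
  classical
  rcases finite_or_infinite I with hfin | hinf
  · haveI := Fintype.ofFinite I
    refine ⟨Finset.univ, fun x hx => ?_⟩
    have : x = 0 := funext fun i => hx i (Finset.mem_univ i)
    rw [this, map_zero]
  · obtain ⟨d⟩ : Nonempty (Denumerable I) :=
      nonempty_denumerable_iff.2 ⟨inferInstance, inferInstance⟩
    set e : ℕ ≃ I := (Denumerable.eqv I).symm with he
    by_contra hcon
    push_neg at hcon
    choose x hx1 hx2 using hcon
    set F : ℕ → Finset I := fun k => (Finset.range k).image e with hF
    have hxk0 : ∀ k n, n < k → x (F k) (e n) = 0 := by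
      intro k n hn
      exact hx1 (F k) (e n) (Finset.mem_image_of_mem e (Finset.mem_range.2 hn))
    set g : (ℕ → R) →ₗ[R] ((i : I) → A i) :=
      { toFun := fun r => fun i => ∑ k ∈ Finset.range (e.symm i + 1), r k • x (F k) i
        map_add' := by
          intro r s
          funext i
          simp [add_smul, Finset.sum_add_distrib]
        map_smul' := by
          intro c r
          funext i
          simp only [Pi.smul_apply, smul_eq_mul, RingHom.id_apply, Finset.smul_sum, mul_smul] } with hg
    have hgk : ∀ k, g (Pi.single k (1 : R)) = x (F k) := by
      intro k
      funext i
      rw [hg]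
      simp only [LinearMap.coe_mk, AddHom.coe_mk]
      have hterm : ∀ k' : ℕ, (Pi.single k (1:R) : ℕ → R) k' • x (F k') i =
          if k' = k then x (F k') i else 0 := by
        intro k'
        rw [Pi.single_apply]
        split_ifs with h
        · rw [one_smul]
        · rw [zero_smul]
      rw [Finset.sum_congr rfl fun k' _ => hterm k', Finset.sum_ite_eq' _ k fun k' => x (F k') i]
      split_ifs with h
      · rfl
      · rw [Finset.mem_range, not_lt] at h
        have h2 := hxk0 k (e.symm i) (by omega)
        rw [Equiv.apply_symm_apply] at h2
        exact h2.symm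
    obtain ⟨n₀, hn₀⟩ := hM (f.comp g)
    have h0 : f (x (F n₀)) = 0 := by
      have := hn₀ n₀ le_rfl
      rwa [LinearMap.comp_apply, hgk n₀] at this
    exact hx2 (F n₀) h0

theorem slender_repr {M : Type*} [AddCommGroup M] [Module R M]
    (hM : IsSlender R M) {I : Type*} [Countable I] [DecidableEq I] (A : I → Type*)
    [∀ i, AddCommGroup (A i)] [∀ i, Module R (A i)] (f : ((i : I) → A i) →ₗ[R] M) :
    ∃ F : Finset I, (∀ x, f x = ∑ i ∈ F, f (Pi.single i (x i))) ∧
      (∀ i ∉ F, ∀ y : A i, f (Pi.single i y) = 0) := by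
  classical
  obtain ⟨F, hF⟩ := slender_tail hM A f
  refine ⟨F, fun x => ?_, fun i hi y => ?_⟩
  · have hdiff : f (x - ∑ i ∈ F, Pi.single i (x i)) = 0 := by
      refine hF _ fun i hi => ?_
      rw [Pi.sub_apply, Finset.sum_apply, Finset.sum_pi_single]
      simp [hi]
    rw [map_sub, sub_eq_zero] at hdiff
    rw [hdiff, map_sum]
  · refine hF _ fun i' hi' => ?_
    exact Pi.single_eq_of_ne (fun h : i' = i => hi (h ▸ hi')) y

end Slender

-- ===== Core counting lemmas =====
section Core
variable {R : Type*} [Ring R] {I J : Type*} [DecidableEq I] [DecidableEq J]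
variable (A : I → Type*) (B : J → Type*)
  [∀ i, AddCommGroup (A i)] [∀ i, Module R (A i)]
  [∀ j, AddCommGroup (B j)] [∀ j, Module R (B j)]

theorem core_mono
    (hA : ∀ i, IsUniformModule R (A i)) (hB : ∀ j, IsUniformModule R (B j))
    (f : ∀ j i, A i →ₗ[R] B j) (g : ∀ i j, B j →ₗ[R] A i)
    (G : I → Finset J)
    (hg0 : ∀ i j, j ∉ G i → g i j = 0)
    (hdiag : ∀ i x, (∑ j ∈ G i, g i j (f j i x)) = x)
    (hoff : ∀ i i', i ≠ i' → ∀ x, (∑ j ∈ G i, g i j (f j i' x)) = 0)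
    (relI : I → Prop) (relJ : J → Prop)
    (hbad : ∀ i i' j, relI i → relI i' → ¬ relJ j →
      ¬ Function.Injective fun x : A i' => g i j (f j i' x))
    (S : Finset I) (hS : ∀ i ∈ S, relI i) :
    ∃ T : Finset J, (∀ j ∈ T, relJ j) ∧ S.card ≤ T.card := by
  classical
  set T : Finset J := (S.biUnion G).filter relJ with hT
  refine ⟨T, fun j hj => (Finset.mem_filter.1 hj).2, ?_⟩
  have hbad' : ∀ (a b : {x // x ∈ S}) (j : J), j ∈ G a.1 \ T →
      ¬ Function.Injective fun x : A b.1 => g a.1 j (f j b.1 x) := by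
    intro a b j hj
    obtain ⟨hjG, hjT⟩ := Finset.mem_sdiff.1 hj
    have hrelJ : ¬ relJ j := fun hr =>
      hjT (Finset.mem_filter.2 ⟨Finset.mem_biUnion.2 ⟨a.1, a.2, hjG⟩, hr⟩)
    exact hbad a.1 b.1 j (hS a.1 a.2) (hS b.1 b.2) hrelJ
  set Φ : ((a : {x // x ∈ S}) → A a.1) →ₗ[R] ((t : {x // x ∈ T}) → B t.1) :=
    LinearMap.pi (fun t => ∑ a : {x // x ∈ S}, (f t.1 a.1).comp (LinearMap.proj a)) with hΦ
  set Ψ : ((t : {x // x ∈ T}) → B t.1) →ₗ[R] ((a : {x // x ∈ S}) → A a.1) :=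
    LinearMap.pi (fun a => ∑ t : {x // x ∈ T}, (g a.1 t.1).comp (LinearMap.proj t)) with hΨ
  set W := Ψ.comp Φ with hW
  have hΦcomp : ∀ (b : {x // x ∈ S}) (x : A b.1) (t : {x // x ∈ T}),
      Φ (Pi.single b x) t = f t.1 b.1 x := by
    intro b x t
    rw [hΦ]
    simp only [LinearMap.pi_apply, LinearMap.sum_apply, LinearMap.comp_apply,
      LinearMap.proj_apply]
    rw [Finset.sum_eq_single b]
    · rw [Pi.single_eq_same]
    · intro a' _ hne
      rw [Pi.single_eq_of_ne hne, map_zero]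
    · intro h; exact absurd (Finset.mem_univ b) h
  have hWcomp : ∀ (a b : {x // x ∈ S}) (x : A b.1),
      W (Pi.single b x) a = ∑ j ∈ T, g a.1 j (f j b.1 x) := by
    intro a b x
    rw [hW, LinearMap.comp_apply, hΨ]
    simp only [LinearMap.pi_apply, LinearMap.sum_apply, LinearMap.comp_apply,
      LinearMap.proj_apply]
    calc ∑ t : {x // x ∈ T}, g a.1 t.1 (Φ (Pi.single b x) t)
        = ∑ t : {x // x ∈ T}, g a.1 t.1 (f t.1 b.1 x) :=
          Finset.sum_congr rfl fun t _ => by rw [hΦcomp]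
      _ = ∑ j ∈ T, g a.1 j (f j b.1 x) := by
          rw [Finset.univ_eq_attach]; exact Finset.sum_attach T (fun j => g a.1 j (f j b.1 x))
  have hsplit : ∀ (a b : {x // x ∈ S}) (x : A b.1),
      (∑ j ∈ T, g a.1 j (f j b.1 x)) =
        (∑ j ∈ G a.1, g a.1 j (f j b.1 x)) - ∑ j ∈ G a.1 \ T, g a.1 j (f j b.1 x) := by
    intro a b x
    have h1 : ∑ j ∈ T, g a.1 j (f j b.1 x) = ∑ j ∈ G a.1 ∩ T, g a.1 j (f j b.1 x) := by
      refine (Finset.sum_subset Finset.inter_subset_right fun j hj hj2 => ?_).symm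
      have : j ∉ G a.1 := fun hG => hj2 (Finset.mem_inter.2 ⟨hG, hj⟩)
      rw [hg0 a.1 j this]
      rfl
    have h2 : (∑ j ∈ G a.1 ∩ T, g a.1 j (f j b.1 x)) + ∑ j ∈ G a.1 \ T, g a.1 j (f j b.1 x)
        = ∑ j ∈ G a.1, g a.1 j (f j b.1 x) := Finset.sum_inter_add_sum_sdiff _ _ _
    rw [h1, ← h2]
    abel
  have hfun_diag : ∀ (b : {x // x ∈ S}) (x : A b.1),
      W (Pi.single b x) b - x = -(∑ j ∈ G b.1 \ T, g b.1 j (f j b.1 x)) := by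
    intro b x
    rw [hWcomp, hsplit, hdiag b.1 x]
    abel
  have hfun_off : ∀ (a b : {x // x ∈ S}), a ≠ b → ∀ (x : A b.1),
      W (Pi.single b x) a = -(∑ j ∈ G a.1 \ T, g a.1 j (f j b.1 x)) := by
    intro a b hne x
    rw [hWcomp, hsplit, hoff a.1 b.1 (fun h => hne (Subtype.ext h)) x]
    abel
  -- a common nonzero kernel element for the bad maps
  have hker : ∀ (a b : {x // x ∈ S}), ∃ x₀ : A b.1, x₀ ≠ 0 ∧
      ∀ j ∈ G a.1 \ T, g a.1 j (f j b.1 x₀) = 0 := by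
    intro a b
    have hne : ((G a.1 \ T).inf fun j => LinearMap.ker ((g a.1 j).comp (f j b.1))) ≠ ⊥ := by
      refine inf_ne_bot_finset (hA b.1) _ _ fun j hj => ?_
      intro hk
      exact hbad' a b j hj (LinearMap.ker_eq_bot.1 hk)
    obtain ⟨x₀, hx₀, hx₀ne⟩ := (Submodule.ne_bot_iff _).1 hne
    refine ⟨x₀, hx₀ne, fun j hj => ?_⟩
    exact (Submodule.mem_finsetInf.1 hx₀) j hj
  have hWinj : Function.Injective W := by
    refine matrix_injective (fun a : {x // x ∈ S} => A a.1) (fun a => hA a.1) W ?_ ?_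
    · intro b hinj
      obtain ⟨x₀, hx₀ne, hx₀⟩ := hker b b
      apply hx₀ne
      refine hinj ?_
      show W (Pi.single b x₀) b - x₀ = W (Pi.single b 0) b - 0
      rw [hfun_diag, Finset.sum_congr rfl hx₀]
      simp
    · intro a b hne hinj
      obtain ⟨x₀, hx₀ne, hx₀⟩ := hker a b
      apply hx₀ne
      refine hinj ?_
      show W (Pi.single b x₀) a = W (Pi.single b 0) a
      rw [hfun_off a b hne, Finset.sum_congr rfl hx₀, hfun_off a b hne]
      simp
  have hΦinj : Function.Injective Φ := by
    intro x y hxy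
    exact hWinj (by rw [hW, LinearMap.comp_apply, LinearMap.comp_apply, hxy])
  have hcard := card_le_of_injective_pi (fun a : {x // x ∈ S} => A a.1)
    (fun t : {x // x ∈ T} => B t.1) (fun a => (hA a.1).1) (fun t => hB t.1) Φ hΦinj
  rwa [Fintype.card_coe, Fintype.card_coe] at hcard

theorem core_epi
    (hA : ∀ i, IsCouniformModule R (A i)) (hB : ∀ j, IsCouniformModule R (B j))
    (f : ∀ j i, A i →ₗ[R] B j) (g : ∀ i j, B j →ₗ[R] A i)
    (G : I → Finset J)
    (hg0 : ∀ i j, j ∉ G i → g i j = 0)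
    (hdiag : ∀ i x, (∑ j ∈ G i, g i j (f j i x)) = x)
    (hoff : ∀ i i', i ≠ i' → ∀ x, (∑ j ∈ G i, g i j (f j i' x)) = 0)
    (relI : I → Prop) (relJ : J → Prop)
    (hbad : ∀ i i' j, relI i → relI i' → ¬ relJ j →
      ¬ Function.Surjective fun x : A i' => g i j (f j i' x))
    (S : Finset I) (hS : ∀ i ∈ S, relI i) :
    ∃ T : Finset J, (∀ j ∈ T, relJ j) ∧ S.card ≤ T.card := by
  classical
  set T : Finset J := (S.biUnion G).filter relJ with hT
  refine ⟨T, fun j hj => (Finset.mem_filter.1 hj).2, ?_⟩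
  have hbad' : ∀ (a b : {x // x ∈ S}) (j : J), j ∈ G a.1 \ T →
      ¬ Function.Surjective fun x : A b.1 => g a.1 j (f j b.1 x) := by
    intro a b j hj
    obtain ⟨hjG, hjT⟩ := Finset.mem_sdiff.1 hj
    have hrelJ : ¬ relJ j := fun hr =>
      hjT (Finset.mem_filter.2 ⟨Finset.mem_biUnion.2 ⟨a.1, a.2, hjG⟩, hr⟩)
    exact hbad a.1 b.1 j (hS a.1 a.2) (hS b.1 b.2) hrelJ
  set Φ : ((a : {x // x ∈ S}) → A a.1) →ₗ[R] ((t : {x // x ∈ T}) → B t.1) :=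
    LinearMap.pi (fun t => ∑ a : {x // x ∈ S}, (f t.1 a.1).comp (LinearMap.proj a)) with hΦ
  set Ψ : ((t : {x // x ∈ T}) → B t.1) →ₗ[R] ((a : {x // x ∈ S}) → A a.1) :=
    LinearMap.pi (fun a => ∑ t : {x // x ∈ T}, (g a.1 t.1).comp (LinearMap.proj t)) with hΨ
  set W := Ψ.comp Φ with hW
  have hΦcomp : ∀ (b : {x // x ∈ S}) (x : A b.1) (t : {x // x ∈ T}),
      Φ (Pi.single b x) t = f t.1 b.1 x := by
    intro b x t
    rw [hΦ]
    simp only [LinearMap.pi_apply, LinearMap.sum_apply, LinearMap.comp_apply,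
      LinearMap.proj_apply]
    rw [Finset.sum_eq_single b]
    · rw [Pi.single_eq_same]
    · intro a' _ hne
      rw [Pi.single_eq_of_ne hne, map_zero]
    · intro h; exact absurd (Finset.mem_univ b) h
  have hWcomp : ∀ (a b : {x // x ∈ S}) (x : A b.1),
      W (Pi.single b x) a = ∑ j ∈ T, g a.1 j (f j b.1 x) := by
    intro a b x
    rw [hW, LinearMap.comp_apply, hΨ]
    simp only [LinearMap.pi_apply, LinearMap.sum_apply, LinearMap.comp_apply,
      LinearMap.proj_apply]
    calc ∑ t : {x // x ∈ T}, g a.1 t.1 (Φ (Pi.single b x) t)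
        = ∑ t : {x // x ∈ T}, g a.1 t.1 (f t.1 b.1 x) :=
          Finset.sum_congr rfl fun t _ => by rw [hΦcomp]
      _ = ∑ j ∈ T, g a.1 j (f j b.1 x) := by
          rw [Finset.univ_eq_attach]; exact Finset.sum_attach T (fun j => g a.1 j (f j b.1 x))
  have hsplit : ∀ (a b : {x // x ∈ S}) (x : A b.1),
      (∑ j ∈ T, g a.1 j (f j b.1 x)) =
        (∑ j ∈ G a.1, g a.1 j (f j b.1 x)) - ∑ j ∈ G a.1 \ T, g a.1 j (f j b.1 x) := by
    intro a b x
    have h1 : ∑ j ∈ T, g a.1 j (f j b.1 x) = ∑ j ∈ G a.1 ∩ T, g a.1 j (f j b.1 x) := by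
      refine (Finset.sum_subset Finset.inter_subset_right fun j hj hj2 => ?_).symm
      have : j ∉ G a.1 := fun hG => hj2 (Finset.mem_inter.2 ⟨hG, hj⟩)
      rw [hg0 a.1 j this]
      rfl
    have h2 : (∑ j ∈ G a.1 ∩ T, g a.1 j (f j b.1 x)) + ∑ j ∈ G a.1 \ T, g a.1 j (f j b.1 x)
        = ∑ j ∈ G a.1, g a.1 j (f j b.1 x) := Finset.sum_inter_add_sum_sdiff _ _ _
    rw [h1, ← h2]
    abel
  have hfun_diag : ∀ (b : {x // x ∈ S}) (x : A b.1),
      W (Pi.single b x) b - x = -(∑ j ∈ G b.1 \ T, g b.1 j (f j b.1 x)) := by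
    intro b x
    rw [hWcomp, hsplit, hdiag b.1 x]
    abel
  have hfun_off : ∀ (a b : {x // x ∈ S}), a ≠ b → ∀ (x : A b.1),
      W (Pi.single b x) a = -(∑ j ∈ G a.1 \ T, g a.1 j (f j b.1 x)) := by
    intro a b hne x
    rw [hWcomp, hsplit, hoff a.1 b.1 (fun h => hne (Subtype.ext h)) x]
    abel
  have hsupne : ∀ (a b : {x // x ∈ S}),
      ((G a.1 \ T).sup fun j => LinearMap.range ((g a.1 j).comp (f j b.1))) ≠ ⊤ := by
    intro a b
    refine sup_ne_top_finset (hA a.1) _ _ fun j hj htop => ?_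
    exact hbad' a b j hj (LinearMap.range_eq_top.1 htop)
  have hWsurj : Function.Surjective W := by
    refine matrix_surjective (fun a : {x // x ∈ S} => A a.1) (fun a => hA a.1) W ?_ ?_
    · intro b hsurj
      refine hsupne b b (eq_top_iff.2 fun z _ => ?_)
      obtain ⟨x, hx⟩ := hsurj (-z)
      have hz : z = ∑ j ∈ G b.1 \ T, g b.1 j (f j b.1 x) := by
        have hx' : W (Pi.single b x) b - x = -z := hx
        have h2 := hfun_diag b x
        rw [hx'] at h2
        exact neg_injective h2
      rw [hz]
      exact Submodule.sum_mem _ fun j hj =>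
        smem (Finset.le_sup (f := fun j => LinearMap.range (g b.1 j ∘ₗ f j b.1)) hj) (LinearMap.mem_range_self _ x)
    · intro a b hne hsurj
      refine hsupne a b (eq_top_iff.2 fun z _ => ?_)
      obtain ⟨x, hx⟩ := hsurj (-z)
      have hz : z = ∑ j ∈ G a.1 \ T, g a.1 j (f j b.1 x) := by
        have hx' : W (Pi.single b x) a = -z := hx
        have h2 := hfun_off a b (fun h => hne h) x
        rw [hx'] at h2
        exact neg_injective h2
      rw [hz]
      exact Submodule.sum_mem _ fun j hj =>
        smem (Finset.le_sup (f := fun j => LinearMap.range (g a.1 j ∘ₗ f j b.1)) hj) (LinearMap.mem_range_self _ x)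
  have hΨsurj : Function.Surjective Ψ := by
    intro y
    obtain ⟨x, hx⟩ := hWsurj y
    exact ⟨Φ x, hx⟩
  have hcard := card_le_of_surjective_pi (fun t : {x // x ∈ T} => B t.1)
    (fun a : {x // x ∈ S} => A a.1) (fun t => hB t.1) (fun a => (hA a.1).1) Ψ hΨsurj
  rwa [Fintype.card_coe, Fintype.card_coe] at hcard

end Core

-- ===== Cardinality matching and gluing =====
section Glue

theorem card_equiv {X Y : Type*} [Countable X] [Countable Y]
    (h1 : ∀ S : Finset X, ∃ T : Finset Y, S.card ≤ T.card)
    (h2 : ∀ T : Finset Y, ∃ S : Finset X, T.card ≤ S.card) :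
    Nonempty (X ≃ Y) := by
  classical
  rcases finite_or_infinite X with hX | hX
  · haveI := Fintype.ofFinite X
    rcases finite_or_infinite Y with hY | hY
    · haveI := Fintype.ofFinite Y
      obtain ⟨T, hT⟩ := h1 Finset.univ
      obtain ⟨S, hS⟩ := h2 Finset.univ
      refine ⟨Fintype.equivOfCardEq (le_antisymm ?_ ?_)⟩
      · rw [← Finset.card_univ]
        exact hT.trans (Finset.card_le_univ T)
      · rw [← Finset.card_univ]
        exact hS.trans (Finset.card_le_univ S)
    · obtain ⟨T, hTcard⟩ := Infinite.exists_subset_card_eq Y (Fintype.card X + 1)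
      obtain ⟨S, hS⟩ := h2 T
      have hle := Finset.card_le_univ S
      exact absurd hTcard (by omega)
  · rcases finite_or_infinite Y with hY | hY
    · haveI := Fintype.ofFinite Y
      obtain ⟨S, hScard⟩ := Infinite.exists_subset_card_eq X (Fintype.card Y + 1)
      obtain ⟨T, hT⟩ := h1 S
      have hle := Finset.card_le_univ T
      exact absurd hScard (by omega)
    · obtain ⟨dX⟩ : Nonempty (Denumerable X) :=
        nonempty_denumerable_iff.2 ⟨inferInstance, inferInstance⟩
      obtain ⟨dY⟩ : Nonempty (Denumerable Y) :=
        nonempty_denumerable_iff.2 ⟨inferInstance, inferInstance⟩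
      exact ⟨(@Denumerable.eqv X dX).trans (@Denumerable.eqv Y dY).symm⟩

theorem glue {I J : Type*} (W : I ⊕ J → I ⊕ J → Prop) (hEq : Equivalence W)
    (hcnt : ∀ x : I ⊕ J, Nonempty ({i : I // W (Sum.inl i) x} ≃ {j : J // W (Sum.inr j) x})) :
    ∃ σ : I ≃ J, ∀ i, W (Sum.inl i) (Sum.inr (σ i)) := by
  classical
  letI s : Setoid (I ⊕ J) := ⟨W, hEq⟩
  set fI : I → Quotient s := fun i => Quotient.mk s (Sum.inl i) with hfI
  set fJ : J → Quotient s := fun j => Quotient.mk s (Sum.inr j) with hfJ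
  have hq : ∀ q : Quotient s, Nonempty ({i // fI i = q} ≃ {j // fJ j = q}) := by
    intro q
    induction q using Quotient.inductionOn with
    | h x =>
      obtain ⟨e⟩ := hcnt x
      refine ⟨(Equiv.subtypeEquivRight fun i => ?_).trans
        (e.trans (Equiv.subtypeEquivRight fun j => ?_))⟩
      · exact ⟨fun h => Quotient.exact h, fun h => Quotient.sound h⟩
      · exact ⟨fun h => Quotient.sound h, fun h => Quotient.exact h⟩
  have E : ∀ q, {i // fI i = q} ≃ {j // fJ j = q} := fun q => (hq q).some
  set σ : I ≃ J := (Equiv.sigmaFiberEquiv fI).symm.trans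
    ((Equiv.sigmaCongrRight E).trans (Equiv.sigmaFiberEquiv fJ)) with hσ
  refine ⟨σ, fun i => ?_⟩
  have hval : σ i = (E (fI i) ⟨i, rfl⟩).1 := rfl
  have hprop : fJ (σ i) = fI i := by
    rw [hval]
    exact (E (fI i) ⟨i, rfl⟩).2
  exact hEq.symm (Quotient.exact hprop)

end Glue

-- ===== composite factor lemmas =====
section CompParts
variable {R : Type*} [Ring R] {M N P : Type*}
  [AddCommGroup M] [Module R M] [AddCommGroup N] [Module R N] [AddCommGroup P] [Module R P]

theorem comp_inj_parts (f : M →ₗ[R] N) (g : N →ₗ[R] P)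
    (hN : IsUniformModule R N) (hM : ∃ m : M, m ≠ 0)
    (h : Function.Injective fun x => g (f x)) :
    Function.Injective f ∧ Function.Injective g := by
  have hf : Function.Injective f := by
    intro x y hxy
    exact h (by simp [hxy])
  refine ⟨hf, ?_⟩
  rw [← LinearMap.ker_eq_bot]
  by_contra hker
  obtain ⟨m₀, hm₀⟩ := hM
  have hrange : LinearMap.range f ≠ ⊥ := by
    rw [ne_eq, Submodule.eq_bot_iff]
    push_neg
    exact ⟨f m₀, LinearMap.mem_range_self f m₀, fun h0 => hm₀ (hf (by rw [h0, map_zero]))⟩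
  have hinf := hN.2 _ _ hker hrange
  obtain ⟨y, ⟨hyk, hyr⟩, hyne⟩ := (Submodule.ne_bot_iff _).1 hinf
  obtain ⟨m, rfl⟩ := hyr
  have : m = 0 := h (by simpa using hyk)
  exact hyne (by rw [this, map_zero])

theorem comp_surj_parts (f : M →ₗ[R] N) (g : N →ₗ[R] P)
    (hN : IsCouniformModule R N) (hP : ∃ p : P, p ≠ 0)
    (h : Function.Surjective fun x => g (f x)) :
    Function.Surjective f ∧ Function.Surjective g := by
  have hg : Function.Surjective g := by
    intro y
    obtain ⟨x, hx⟩ := h y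
    exact ⟨f x, hx⟩
  refine ⟨?_, hg⟩
  have hsup : LinearMap.range f ⊔ LinearMap.ker g = ⊤ := by
    rw [eq_top_iff]
    intro y _
    obtain ⟨x, hx⟩ := h (g y)
    have hx' : g (f x) = g y := hx
    have : y = f x + (y - f x) := by abel
    rw [this]
    refine Submodule.add_mem _ (smem le_sup_left (LinearMap.mem_range_self f x))
      (smem le_sup_right (LinearMap.mem_ker.2 ?_))
    rw [map_sub, hx', sub_self]
  have hkerne : LinearMap.ker g ≠ ⊤ := by
    intro hker
    obtain ⟨p₀, hp₀⟩ := hP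
    obtain ⟨x, hx⟩ := h p₀
    exact hp₀ (by rw [← hx]; exact (Submodule.eq_top_iff'.1 hker) (f x))
  rw [← LinearMap.range_eq_top]
  by_contra hrange
  exact hN.2 _ _ hrange hkerne hsup

end CompParts

section SMHelpers
variable {R : Type*} [Ring R]

theorem sm_refl (M : Type*) [AddCommGroup M] [Module R M] : SameMonogenyClass R M M :=
  ⟨⟨LinearMap.id, fun _ _ h => h⟩, ⟨LinearMap.id, fun _ _ h => h⟩⟩

theorem sm_symm {M N : Type*} [AddCommGroup M] [Module R M] [AddCommGroup N] [Module R N] :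
    SameMonogenyClass R M N → SameMonogenyClass R N M := fun h => ⟨h.2, h.1⟩

theorem sm_trans {M N P : Type*} [AddCommGroup M] [Module R M] [AddCommGroup N] [Module R N]
    [AddCommGroup P] [Module R P] :
    SameMonogenyClass R M N → SameMonogenyClass R N P → SameMonogenyClass R M P := by
  rintro ⟨⟨f1, hf1⟩, ⟨g1, hg1⟩⟩ ⟨⟨f2, hf2⟩, ⟨g2, hg2⟩⟩
  exact ⟨⟨f2.comp f1, by rw [LinearMap.coe_comp]; exact hf2.comp hf1⟩,
    ⟨g1.comp g2, by rw [LinearMap.coe_comp]; exact hg1.comp hg2⟩⟩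

theorem se_refl (M : Type*) [AddCommGroup M] [Module R M] : SameEpigenyClass R M M :=
  ⟨⟨LinearMap.id, fun x => ⟨x, rfl⟩⟩, ⟨LinearMap.id, fun x => ⟨x, rfl⟩⟩⟩

theorem se_symm {M N : Type*} [AddCommGroup M] [Module R M] [AddCommGroup N] [Module R N] :
    SameEpigenyClass R M N → SameEpigenyClass R N M := fun h => ⟨h.2, h.1⟩

theorem se_trans {M N P : Type*} [AddCommGroup M] [Module R M] [AddCommGroup N] [Module R N]
    [AddCommGroup P] [Module R P] :
    SameEpigenyClass R M N → SameEpigenyClass R N P → SameEpigenyClass R M P := by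
  rintro ⟨⟨f1, hf1⟩, ⟨g1, hg1⟩⟩ ⟨⟨f2, hf2⟩, ⟨g2, hg2⟩⟩
  exact ⟨⟨f2.comp f1, by rw [LinearMap.coe_comp]; exact hf2.comp hf1⟩,
    ⟨g1.comp g2, by rw [LinearMap.coe_comp]; exact hg1.comp hg2⟩⟩

end SMHelpers


end ALLINFRA

/-- For countable families of slender biuniform modules, an isomorphism of the direct
products yields bijections matching the monogeny classes and the epigeny classes. -/
theorem sameClasses_of_direct_products_isomorphic_slender_biuniform
    {R : Type*} [Ring R] {I J : Type*} [Countable I] [Countable J]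
    (A : I → Type*) (B : J → Type*)
    [∀ i, AddCommGroup (A i)] [∀ i, Module R (A i)]
    [∀ j, AddCommGroup (B j)] [∀ j, Module R (B j)]
    (hAs : ∀ i, IsSlender R (A i)) (hAb : ∀ i, IsBiuniformModule R (A i))
    (hBs : ∀ j, IsSlender R (B j)) (hBb : ∀ j, IsBiuniformModule R (B j))
    (h : Nonempty (((i : I) → A i) ≃ₗ[R] ((j : J) → B j))) :
    ∃ σ τ : I ≃ J,
      (∀ i, SameMonogenyClass R (A i) (B (σ i))) ∧
      (∀ i, SameEpigenyClass R (A i) (B (τ i))) := by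
  classical
  obtain ⟨φ⟩ := h
  have hAu : ∀ i, IsUniformModule R (A i) := fun i => (hAb i).1
  have hAc : ∀ i, IsCouniformModule R (A i) := fun i => (hAb i).2
  have hBu : ∀ j, IsUniformModule R (B j) := fun j => (hBb j).1
  have hBc : ∀ j, IsCouniformModule R (B j) := fun j => (hBb j).2
  choose F hF1 hF2 using fun j : J =>
    slender_repr (hBs j) A ((LinearMap.proj j).comp φ.toLinearMap)
  choose G hG1 hG2 using fun i : I =>
    slender_repr (hAs i) B ((LinearMap.proj i).comp φ.symm.toLinearMap)
  set f : ∀ j i, A i →ₗ[R] B j := fun j i =>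
    ((LinearMap.proj j).comp φ.toLinearMap).comp (LinearMap.single R A i) with hfdef
  set g : ∀ i j, B j →ₗ[R] A i := fun i j =>
    ((LinearMap.proj i).comp φ.symm.toLinearMap).comp (LinearMap.single R B j) with hgdef
  have hg0 : ∀ i j, j ∉ G i → g i j = 0 := fun i j hj => LinearMap.ext fun y => hG2 i j hj y
  have hf0 : ∀ j i, i ∉ F j → f j i = 0 := fun j i hi => LinearMap.ext fun y => hF2 j i hi y
  have hdiagA : ∀ i x, (∑ j ∈ G i, g i j (f j i x)) = x := by
    intro i x
    have h1 := hG1 i (φ (Pi.single i x))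
    have h2 : ((LinearMap.proj i).comp φ.symm.toLinearMap) (φ (Pi.single i x)) = x := by
      show φ.symm (φ (Pi.single i x)) i = x
      rw [LinearEquiv.symm_apply_apply]
      exact Pi.single_eq_same i x
    rw [h2] at h1
    exact h1.symm
  have hoffA : ∀ i i', i ≠ i' → ∀ x, (∑ j ∈ G i, g i j (f j i' x)) = 0 := by
    intro i i' hne x
    have h1 := hG1 i (φ (Pi.single i' x))
    have h2 : ((LinearMap.proj i).comp φ.symm.toLinearMap) (φ (Pi.single i' x)) = 0 := by
      show φ.symm (φ (Pi.single i' x)) i = 0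
      rw [LinearEquiv.symm_apply_apply]
      exact Pi.single_eq_of_ne hne x
    rw [h2] at h1
    exact h1.symm
  have hdiagB : ∀ j x, (∑ i ∈ F j, f j i (g i j x)) = x := by
    intro j x
    have h1 := hF1 j (φ.symm (Pi.single j x))
    have h2 : ((LinearMap.proj j).comp φ.toLinearMap) (φ.symm (Pi.single j x)) = x := by
      show φ (φ.symm (Pi.single j x)) j = x
      rw [LinearEquiv.apply_symm_apply]
      exact Pi.single_eq_same j x
    rw [h2] at h1
    exact h1.symm
  have hoffB : ∀ j j', j ≠ j' → ∀ x, (∑ i ∈ F j, f j i (g i j' x)) = 0 := by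
    intro j j' hne x
    have h1 := hF1 j (φ.symm (Pi.single j' x))
    have h2 : ((LinearMap.proj j).comp φ.toLinearMap) (φ.symm (Pi.single j' x)) = 0 := by
      show φ (φ.symm (Pi.single j' x)) j = 0
      rw [LinearEquiv.apply_symm_apply]
      exact Pi.single_eq_of_ne hne x
    rw [h2] at h1
    exact h1.symm
  -- ===== monogeny bijection =====
  have hσ : ∃ σ : I ≃ J, ∀ i, SameMonogenyClass R (A i) (B (σ i)) := by
    set Wm : I ⊕ J → I ⊕ J → Prop := fun x y =>
      match x, y with
      | .inl i, .inl i' => SameMonogenyClass R (A i) (A i')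
      | .inl i, .inr j => SameMonogenyClass R (A i) (B j)
      | .inr j, .inl i => SameMonogenyClass R (B j) (A i)
      | .inr j, .inr j' => SameMonogenyClass R (B j) (B j') with hWm
    have hWmEq : Equivalence Wm := by
      refine ⟨?_, ?_, ?_⟩
      · rintro (i | j) <;> exact sm_refl _
      · rintro (i | j) (i' | j') h <;> exact sm_symm h
      · rintro (i | j) (i' | j') (i'' | j'') h1 h2 <;> exact sm_trans h1 h2
    have hcntM : ∀ x : I ⊕ J,
        Nonempty ({i : I // Wm (Sum.inl i) x} ≃ {j : J // Wm (Sum.inr j) x}) := by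
      intro x
      have hbad1 : ∀ i i' j, Wm (.inl i) x → Wm (.inl i') x → ¬ Wm (.inr j) x →
          ¬ Function.Injective fun z : A i' => g i j (f j i' z) := by
        intro i i' j hi hi' hj hinj
        obtain ⟨hfinj, hginj⟩ := comp_inj_parts (f j i') (g i j) (hBu j) ((hAu i').1) hinj
        apply hj
        have hAA : Wm (.inl i) (.inl i') := hWmEq.trans hi (hWmEq.symm hi')
        obtain ⟨⟨u, hu⟩, ⟨v, hv⟩⟩ := hAA
        have hBA : Wm (.inr j) (.inl i) :=
          ⟨⟨g i j, hginj⟩, ⟨(f j i').comp u, by rw [LinearMap.coe_comp]; exact hfinj.comp hu⟩⟩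
        exact hWmEq.trans hBA hi
      have hbad2 : ∀ j j' i, Wm (.inr j) x → Wm (.inr j') x → ¬ Wm (.inl i) x →
          ¬ Function.Injective fun z : B j' => f j i (g i j' z) := by
        intro j j' i hj hj' hi hinj
        obtain ⟨hginj, hfinj⟩ := comp_inj_parts (g i j') (f j i) (hAu i) ((hBu j').1) hinj
        apply hi
        have hBB : Wm (.inr j) (.inr j') := hWmEq.trans hj (hWmEq.symm hj')
        obtain ⟨⟨u, hu⟩, ⟨v, hv⟩⟩ := hBB
        have hAB : Wm (.inl i) (.inr j) :=
          ⟨⟨f j i, hfinj⟩, ⟨(g i j').comp u, by rw [LinearMap.coe_comp]; exact hginj.comp hu⟩⟩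
        exact hWmEq.trans hAB hj
      apply card_equiv
      · intro S
        obtain ⟨T, hT1, hT2⟩ := core_mono A B hAu hBu f g G hg0 hdiagA hoffA
          (fun i => Wm (.inl i) x) (fun j => Wm (.inr j) x) hbad1
          (S.map (Function.Embedding.subtype _))
          (by rintro i hi; obtain ⟨⟨i', hp⟩, _, rfl⟩ := Finset.mem_map.1 hi; exact hp)
        refine ⟨T.subtype (fun j => Wm (.inr j) x), ?_⟩
        have hc1 : (T.subtype (fun j => Wm (.inr j) x)).card = T.card := by
          rw [Finset.card_subtype, Finset.filter_true_of_mem hT1]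
        rw [hc1]
        calc S.card = (S.map (Function.Embedding.subtype _)).card := (Finset.card_map _).symm
          _ ≤ T.card := hT2
      · intro T
        obtain ⟨S, hS1, hS2⟩ := core_mono B A hBu hAu g f F hf0 hdiagB hoffB
          (fun j => Wm (.inr j) x) (fun i => Wm (.inl i) x) hbad2
          (T.map (Function.Embedding.subtype _))
          (by rintro j hj; obtain ⟨⟨j', hp⟩, _, rfl⟩ := Finset.mem_map.1 hj; exact hp)
        refine ⟨S.subtype (fun i => Wm (.inl i) x), ?_⟩
        have hc1 : (S.subtype (fun i => Wm (.inl i) x)).card = S.card := by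
          rw [Finset.card_subtype, Finset.filter_true_of_mem hS1]
        rw [hc1]
        calc T.card = (T.map (Function.Embedding.subtype _)).card := (Finset.card_map _).symm
          _ ≤ S.card := hS2
    obtain ⟨σ, hσ⟩ := glue Wm hWmEq hcntM
    exact ⟨σ, fun i => hσ i⟩
  -- ===== epigeny bijection =====
  have hτ : ∃ τ : I ≃ J, ∀ i, SameEpigenyClass R (A i) (B (τ i)) := by
    set We : I ⊕ J → I ⊕ J → Prop := fun x y =>
      match x, y with
      | .inl i, .inl i' => SameEpigenyClass R (A i) (A i')
      | .inl i, .inr j => SameEpigenyClass R (A i) (B j)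
      | .inr j, .inl i => SameEpigenyClass R (B j) (A i)
      | .inr j, .inr j' => SameEpigenyClass R (B j) (B j') with hWe
    have hWeEq : Equivalence We := by
      refine ⟨?_, ?_, ?_⟩
      · rintro (i | j) <;> exact se_refl _
      · rintro (i | j) (i' | j') h <;> exact se_symm h
      · rintro (i | j) (i' | j') (i'' | j'') h1 h2 <;> exact se_trans h1 h2
    have hcntE : ∀ x : I ⊕ J,
        Nonempty ({i : I // We (Sum.inl i) x} ≃ {j : J // We (Sum.inr j) x}) := by
      intro x
      have hbad1 : ∀ i i' j, We (.inl i) x → We (.inl i') x → ¬ We (.inr j) x →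
          ¬ Function.Surjective fun z : A i' => g i j (f j i' z) := by
        intro i i' j hi hi' hj hsurj
        obtain ⟨hfsurj, hgsurj⟩ := comp_surj_parts (f j i') (g i j) (hBc j) ((hAc i).1) hsurj
        apply hj
        have hAA : We (.inl i') (.inl i) := hWeEq.trans hi' (hWeEq.symm hi)
        obtain ⟨⟨u, hu⟩, ⟨v, hv⟩⟩ := hAA
        have hBA : We (.inr j) (.inl i) :=
          ⟨⟨g i j, hgsurj⟩, ⟨(f j i').comp v, by rw [LinearMap.coe_comp]; exact hfsurj.comp hv⟩⟩
        exact hWeEq.trans hBA hi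
      have hbad2 : ∀ j j' i, We (.inr j) x → We (.inr j') x → ¬ We (.inl i) x →
          ¬ Function.Surjective fun z : B j' => f j i (g i j' z) := by
        intro j j' i hj hj' hi hsurj
        obtain ⟨hgsurj, hfsurj⟩ := comp_surj_parts (g i j') (f j i) (hAc i) ((hBc j).1) hsurj
        apply hi
        have hBB : We (.inr j') (.inr j) := hWeEq.trans hj' (hWeEq.symm hj)
        obtain ⟨⟨u, hu⟩, ⟨v, hv⟩⟩ := hBB
        have hAB : We (.inl i) (.inr j) :=
          ⟨⟨f j i, hfsurj⟩, ⟨(g i j').comp v, by rw [LinearMap.coe_comp]; exact hgsurj.comp hv⟩⟩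
        exact hWeEq.trans hAB hj
      apply card_equiv
      · intro S
        obtain ⟨T, hT1, hT2⟩ := core_epi A B hAc hBc f g G hg0 hdiagA hoffA
          (fun i => We (.inl i) x) (fun j => We (.inr j) x) hbad1
          (S.map (Function.Embedding.subtype _))
          (by rintro i hi; obtain ⟨⟨i', hp⟩, _, rfl⟩ := Finset.mem_map.1 hi; exact hp)
        refine ⟨T.subtype (fun j => We (.inr j) x), ?_⟩
        have hc1 : (T.subtype (fun j => We (.inr j) x)).card = T.card := by
          rw [Finset.card_subtype, Finset.filter_true_of_mem hT1]
        rw [hc1]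
        calc S.card = (S.map (Function.Embedding.subtype _)).card := (Finset.card_map _).symm
          _ ≤ T.card := hT2
      · intro T
        obtain ⟨S, hS1, hS2⟩ := core_epi B A hBc hAc g f F hf0 hdiagB hoffB
          (fun j => We (.inr j) x) (fun i => We (.inl i) x) hbad2
          (T.map (Function.Embedding.subtype _))
          (by rintro j hj; obtain ⟨⟨j', hp⟩, _, rfl⟩ := Finset.mem_map.1 hj; exact hp)
        refine ⟨S.subtype (fun i => We (.inl i) x), ?_⟩
        have hc1 : (S.subtype (fun i => We (.inl i) x)).card = S.card := by
          rw [Finset.card_subtype, Finset.filter_true_of_mem hS1]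
        rw [hc1]
        calc T.card = (T.map (Function.Embedding.subtype _)).card := (Finset.card_map _).symm
          _ ≤ S.card := hS2
    obtain ⟨τ, hτ⟩ := glue We hWeEq hcntE
    exact ⟨τ, fun i => hτ i⟩
  obtain ⟨σ, hσ'⟩ := hσ
  obtain ⟨τ, hτ'⟩ := hτ
  exact ⟨σ, τ, hσ', hτ'⟩
end
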